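/- arXiv:1812.02004 — 7 statements merged into one kernel-verified Lean document; each statement's English description precedes it below -/
import Mathlib

section
/- Convexity/concavity of the Rényi entropy of differential-escort densities in the deformation parameter: let ρ be a probability density and fix q ≠ 1. On the (convex) set of parameters α for which W_{1+α(q−1)}[ρ] is finite and positive, the function α ↦ R_q[ρ_α] = (1/(1−q)) log W_{1+α(q−1)}[ρ] is convex if q < 1 and concave if q > 1. Equivalently, the map s ↦ log W_s[ρ] is a convex function of s on the set where W_s[ρ] is finite. Moreover, if ρ is a uniform density then α ↦ R_q[ρ_α] is affine. -/
open MeasureTheory Set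

/-- The change of variable `y_α(x) = ∫₀ˣ σ(t)^{1-α} dt` of the differential-escort
transformation. -/
noncomputable def yOf (σ : ℝ → ℝ) (α x : ℝ) : ℝ := ∫ t in (0:ℝ)..x, σ t ^ (1 - α)

/-- The differential-escort density `𝔈_α[σ](u) = σ(x_α(u))^α` on `Λ_α = y_α '' Λ`,
extended by `0` outside, where `x_α` is the inverse of `y_α` on `Λ`. -/
noncomputable def escortOf (σ : ℝ → ℝ) (Λ : Set ℝ) (α : ℝ) : ℝ → ℝ :=
  (yOf σ α '' Λ).indicator fun u => σ (Function.invFunOn (yOf σ α) Λ u) ^ α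

/-- A probability density `ρ` on `ℝ`, continuous and strictly positive on an open
interval `Λ = (A, B)` whose closure contains `0`, and zero outside `Λ`. -/
structure DensitySetup where
  ρ : ℝ → ℝ
  A : ℝ
  B : ℝ
  hAB : A < B
  meas : Measurable ρ
  nonneg : ∀ x, 0 ≤ ρ x
  total : (∫ x, ρ x) = 1
  cont : ContinuousOn ρ (Set.Ioo A B)
  pos : ∀ x ∈ Set.Ioo A B, 0 < ρ x
  zero : ∀ x, x ∉ Set.Ioo A B → ρ x = 0
  mem0 : (0:ℝ) ∈ closure (Set.Ioo A B)

/-- Positivity of the entropic moment `W_s[ρ]` whenever it is finite. -/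
private lemma escort_Ipos (E : DensitySetup) {s : ℝ}
    (h : IntegrableOn (fun x => E.ρ x ^ s) (Set.Ioo E.A E.B)) :
    0 < ∫ x in Set.Ioo E.A E.B, E.ρ x ^ s := by
  rw [setIntegral_pos_iff_support_of_nonneg_ae
    (Filter.Eventually.of_forall fun x => Real.rpow_nonneg (E.nonneg x) s) h]
  have h1 : Set.Ioo E.A E.B ⊆
      Function.support (fun x => E.ρ x ^ s) ∩ Set.Ioo E.A E.B := fun x hx =>
    ⟨(Real.rpow_pos_of_pos (E.pos x hx) s).ne', hx⟩
  calc (0 : ENNReal) < volume (Set.Ioo E.A E.B) := by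
        rw [Real.volume_Ioo]; exact ENNReal.ofReal_pos.mpr (sub_pos.mpr E.hAB)
    _ ≤ _ := measure_mono h1

private lemma escort_memLp (E : DensitySetup) {c u : ℝ} (hc : 0 < c)
    (hu : IntegrableOn (fun x => E.ρ x ^ u) (Set.Ioo E.A E.B)) :
    MemLp (fun x => E.ρ x ^ (c * u)) (ENNReal.ofReal (1 / c))
      (volume.restrict (Set.Ioo E.A E.B)) := by
  have hA : ENNReal.ofReal (1 / c) ≠ 0 := by
    rwa [Ne, ENNReal.ofReal_eq_zero, not_le, one_div_pos]
  have hB : ENNReal.ofReal (1 / c) ≠ ⊤ := ENNReal.ofReal_ne_top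
  rw [← memLp_norm_rpow_iff ((E.meas.pow measurable_const).aestronglyMeasurable) hA hB,
    ENNReal.toReal_ofReal (by positivity), ENNReal.div_self hA hB,
    memLp_one_iff_integrable]
  refine hu.congr (Filter.Eventually.of_forall fun x => ?_)
  show E.ρ x ^ u = ‖E.ρ x ^ (c * u)‖ ^ (1 / c)
  rw [Real.norm_of_nonneg (Real.rpow_nonneg (E.nonneg x) _),
    ← Real.rpow_mul (E.nonneg x)]
  congr 1
  field_simp

/-- Convexity of `s ↦ log W_s[ρ]` on the set of finiteness, by Hölder's inequality. -/
private lemma escort_key (E : DensitySetup) :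
    ConvexOn ℝ
      {s : ℝ | IntegrableOn (fun x => E.ρ x ^ s) (Set.Ioo E.A E.B)}
      (fun s => Real.log (∫ x in Set.Ioo E.A E.B, E.ρ x ^ s)) := by
  have hconv : Convex ℝ
      {s : ℝ | IntegrableOn (fun x => E.ρ x ^ s) (Set.Ioo E.A E.B)} := by
    intro s hs t ht a b ha hb hab
    simp only [mem_setOf_eq, smul_eq_mul] at *
    have hdom : IntegrableOn (fun x => a * E.ρ x ^ s + b * E.ρ x ^ t)
        (Set.Ioo E.A E.B) := (hs.const_mul a).add (ht.const_mul b)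
    refine hdom.mono' ((E.meas.pow measurable_const).aestronglyMeasurable)
      ((ae_restrict_iff' measurableSet_Ioo).mpr (Filter.Eventually.of_forall
        fun x hx => ?_))
    have hρ := E.pos x hx
    rw [Real.norm_of_nonneg (Real.rpow_nonneg (E.nonneg x) _)]
    calc E.ρ x ^ (a * s + b * t) = E.ρ x ^ (s * a) * E.ρ x ^ (t * b) := by
          rw [← Real.rpow_add hρ]; ring_nf
      _ = (E.ρ x ^ s) ^ a * (E.ρ x ^ t) ^ b := by
          rw [Real.rpow_mul (E.nonneg x), Real.rpow_mul (E.nonneg x)]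
      _ ≤ a * E.ρ x ^ s + b * E.ρ x ^ t :=
          Real.geom_mean_le_arith_mean2_weighted ha hb
            (Real.rpow_nonneg (E.nonneg x) s) (Real.rpow_nonneg (E.nonneg x) t) hab
  refine ⟨hconv, ?_⟩
  intro s hs t ht a b ha hb hab
  rcases ha.eq_or_lt with h0 | ha'
  · obtain rfl : a = 0 := h0.symm
    obtain rfl : b = 1 := by linarith
    simp
  rcases hb.eq_or_lt with h0 | hb'
  · obtain rfl : b = 0 := h0.symm
    obtain rfl : a = 1 := by linarith
    simp
  simp only [mem_setOf_eq, smul_eq_mul] at *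
  have e : Real.HolderConjugate (1 / a) (1 / b) := Real.holderConjugate_one_div ha' hb' hab
  have hf0 : (0 : ℝ → ℝ) ≤ᵐ[volume.restrict (Set.Ioo E.A E.B)]
      fun x => E.ρ x ^ (a * s) :=
    Filter.Eventually.of_forall fun x => Real.rpow_nonneg (E.nonneg x) _
  have hg0 : (0 : ℝ → ℝ) ≤ᵐ[volume.restrict (Set.Ioo E.A E.B)]
      fun x => E.ρ x ^ (b * t) :=
    Filter.Eventually.of_forall fun x => Real.rpow_nonneg (E.nonneg x) _
  have key := MeasureTheory.integral_mul_le_Lp_mul_Lq_of_nonneg e hf0 hg0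
    (escort_memLp E ha' hs) (escort_memLp E hb' ht)
  have hL : (∫ x in Set.Ioo E.A E.B, E.ρ x ^ (a * s) * E.ρ x ^ (b * t))
      = ∫ x in Set.Ioo E.A E.B, E.ρ x ^ (a * s + b * t) :=
    setIntegral_congr_fun measurableSet_Ioo fun x hx => by
      rw [Real.rpow_add (E.pos x hx)]
  have hGen : ∀ c u : ℝ, 0 < c →
      (∫ x in Set.Ioo E.A E.B, (E.ρ x ^ (c * u)) ^ (1 / c))
        = ∫ x in Set.Ioo E.A E.B, E.ρ x ^ u := by
    intro c u hc
    refine setIntegral_congr_fun measurableSet_Ioo fun x _ => ?_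
    rw [← Real.rpow_mul (E.nonneg x)]
    congr 1
    field_simp
  rw [hL, hGen a s ha', hGen b t hb', one_div_one_div, one_div_one_div] at key
  have hmid : IntegrableOn (fun x => E.ρ x ^ (a * s + b * t)) (Set.Ioo E.A E.B) := by
    have := hconv hs ht ha hb hab
    simpa [smul_eq_mul] using this
  calc Real.log (∫ x in Set.Ioo E.A E.B, E.ρ x ^ (a * s + b * t))
      ≤ Real.log ((∫ x in Set.Ioo E.A E.B, E.ρ x ^ s) ^ a
          * (∫ x in Set.Ioo E.A E.B, E.ρ x ^ t) ^ b) :=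
        Real.log_le_log (escort_Ipos E hmid) key
    _ = a * Real.log (∫ x in Set.Ioo E.A E.B, E.ρ x ^ s)
          + b * Real.log (∫ x in Set.Ioo E.A E.B, E.ρ x ^ t) := by
        rw [Real.log_mul (Real.rpow_pos_of_pos (escort_Ipos E hs) a).ne'
            (Real.rpow_pos_of_pos (escort_Ipos E ht) b).ne',
          Real.log_rpow (escort_Ipos E hs), Real.log_rpow (escort_Ipos E ht)]

/-- **Convexity/concavity of the Rényi entropy of differential-escort densities in the
deformation parameter**: fixing `q ≠ 1`, on the set of `α` for which
`W_{1+α(q-1)}[ρ]` is finite and positive, the map `α ↦ R_q[ρ_α] = (1/(1-q)) log W_{1+α(q-1)}[ρ]`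
is convex if `q < 1` and concave if `q > 1`.  Equivalently, `s ↦ log W_s[ρ]` is convex on
the set where `W_s[ρ]` is finite.  Moreover, if `ρ` is uniform then `α ↦ R_q[ρ_α]` is affine. -/
theorem escort_renyi_convexity (E : DensitySetup) (q : ℝ) (hq : q ≠ 1) :
    ((q < 1 →
        ConvexOn ℝ
          {α : ℝ | IntegrableOn (fun x => E.ρ x ^ (1 + α * (q - 1))) (Set.Ioo E.A E.B)
            ∧ 0 < ∫ x in Set.Ioo E.A E.B, E.ρ x ^ (1 + α * (q - 1))}
          (fun α => (1 / (1 - q))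
            * Real.log (∫ x in Set.Ioo E.A E.B, E.ρ x ^ (1 + α * (q - 1)))))
      ∧ (1 < q →
          ConcaveOn ℝ
            {α : ℝ | IntegrableOn (fun x => E.ρ x ^ (1 + α * (q - 1))) (Set.Ioo E.A E.B)
              ∧ 0 < ∫ x in Set.Ioo E.A E.B, E.ρ x ^ (1 + α * (q - 1))}
            (fun α => (1 / (1 - q))
              * Real.log (∫ x in Set.Ioo E.A E.B, E.ρ x ^ (1 + α * (q - 1))))))
    ∧ ConvexOn ℝ
        {s : ℝ | IntegrableOn (fun x => E.ρ x ^ s) (Set.Ioo E.A E.B)}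
        (fun s => Real.log (∫ x in Set.Ioo E.A E.B, E.ρ x ^ s))
    ∧ ((∃ c : ℝ, 0 < c ∧ ∀ x ∈ Set.Ioo E.A E.B, E.ρ x = c) →
        ∃ m b : ℝ, ∀ α : ℝ,
          (1 / (1 - q)) * Real.log (∫ x in Set.Ioo E.A E.B, E.ρ x ^ (1 + α * (q - 1)))
            = m * α + b) := by
  obtain ⟨Kset, Kineq⟩ := escort_key E
  -- convexity of the parameter set of part 1, and the underlying log-convexity inequality
  have haff : ∀ a b α β : ℝ, a + b = 1 →
      a • (1 + α * (q - 1)) + b • (1 + β * (q - 1))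
        = 1 + (a • α + b • β) * (q - 1) := by
    intro a b α β hab
    simp only [smul_eq_mul]
    linear_combination hab
  have hsetconv : Convex ℝ
      {α : ℝ | IntegrableOn (fun x => E.ρ x ^ (1 + α * (q - 1))) (Set.Ioo E.A E.B)
        ∧ 0 < ∫ x in Set.Ioo E.A E.B, E.ρ x ^ (1 + α * (q - 1))} := by
    intro α hα β hβ a b ha hb hab
    have h := Kset hα.1 hβ.1 ha hb hab
    rw [haff a b α β hab] at h
    exact ⟨h, escort_Ipos E h⟩
  have hineq : ∀ α β : ℝ,
      IntegrableOn (fun x => E.ρ x ^ (1 + α * (q - 1))) (Set.Ioo E.A E.B) →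
      IntegrableOn (fun x => E.ρ x ^ (1 + β * (q - 1))) (Set.Ioo E.A E.B) →
      ∀ a b : ℝ, 0 ≤ a → 0 ≤ b → a + b = 1 →
      Real.log (∫ x in Set.Ioo E.A E.B, E.ρ x ^ (1 + (a • α + b • β) * (q - 1)))
        ≤ a * Real.log (∫ x in Set.Ioo E.A E.B, E.ρ x ^ (1 + α * (q - 1)))
          + b * Real.log (∫ x in Set.Ioo E.A E.B, E.ρ x ^ (1 + β * (q - 1))) := by
    intro α β hα hβ a b ha hb hab
    have h := Kineq hα hβ ha hb hab
    rw [haff a b α β hab] at h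
    simpa [smul_eq_mul] using h
  refine ⟨⟨?_, ?_⟩, ⟨Kset, Kineq⟩, ?_⟩
  · -- q < 1 : convex
    intro hq1
    have hq' : (0 : ℝ) < 1 - q := by linarith
    have hc : (0 : ℝ) ≤ 1 / (1 - q) := by positivity
    refine ⟨hsetconv, ?_⟩
    intro α hα β hβ a b ha hb hab
    have h := hineq α β hα.1 hβ.1 a b ha hb hab
    have := mul_le_mul_of_nonneg_left h hc
    simp only [smul_eq_mul]
    calc (1 / (1 - q)) * Real.log (∫ x in Set.Ioo E.A E.B,
            E.ρ x ^ (1 + (a * α + b * β) * (q - 1)))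
        = (1 / (1 - q)) * Real.log (∫ x in Set.Ioo E.A E.B,
            E.ρ x ^ (1 + (a • α + b • β) * (q - 1))) := by
          simp [smul_eq_mul]
      _ ≤ (1 / (1 - q)) * (a * Real.log (∫ x in Set.Ioo E.A E.B,
            E.ρ x ^ (1 + α * (q - 1)))
            + b * Real.log (∫ x in Set.Ioo E.A E.B, E.ρ x ^ (1 + β * (q - 1)))) := this
      _ = a * ((1 / (1 - q)) * Real.log (∫ x in Set.Ioo E.A E.B,
            E.ρ x ^ (1 + α * (q - 1))))
            + b * ((1 / (1 - q)) * Real.log (∫ x in Set.Ioo E.A E.B,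
              E.ρ x ^ (1 + β * (q - 1)))) := by ring
  · -- 1 < q : concave
    intro hq1
    have hc : 1 / (1 - q) ≤ 0 := by
      apply div_nonpos_of_nonneg_of_nonpos <;> linarith
    refine ⟨hsetconv, ?_⟩
    intro α hα β hβ a b ha hb hab
    have h := hineq α β hα.1 hβ.1 a b ha hb hab
    have h2 := mul_le_mul_of_nonpos_left h hc
    simp only [smul_eq_mul]
    calc a * ((1 / (1 - q)) * Real.log (∫ x in Set.Ioo E.A E.B,
            E.ρ x ^ (1 + α * (q - 1))))
          + b * ((1 / (1 - q)) * Real.log (∫ x in Set.Ioo E.A E.B,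
            E.ρ x ^ (1 + β * (q - 1))))
        = (1 / (1 - q)) * (a * Real.log (∫ x in Set.Ioo E.A E.B,
            E.ρ x ^ (1 + α * (q - 1)))
            + b * Real.log (∫ x in Set.Ioo E.A E.B, E.ρ x ^ (1 + β * (q - 1)))) := by
          ring
      _ ≤ (1 / (1 - q)) * Real.log (∫ x in Set.Ioo E.A E.B,
            E.ρ x ^ (1 + (a • α + b • β) * (q - 1))) := h2
      _ = (1 / (1 - q)) * Real.log (∫ x in Set.Ioo E.A E.B,
            E.ρ x ^ (1 + (a * α + b * β) * (q - 1))) := by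
          simp [smul_eq_mul]
  · -- uniform case
    rintro ⟨c, hc, hcs⟩
    have hI : ∀ s : ℝ, (∫ x in Set.Ioo E.A E.B, E.ρ x ^ s) = (E.B - E.A) * c ^ s := by
      intro s
      rw [setIntegral_congr_fun measurableSet_Ioo (g := fun _ => c ^ s)
        (fun x hx => by rw [hcs x hx]), setIntegral_const, Real.volume_real_Ioo,
        max_eq_left (by linarith [E.hAB]), smul_eq_mul]
    have hlog : ∀ s : ℝ, Real.log (∫ x in Set.Ioo E.A E.B, E.ρ x ^ s)
        = Real.log (E.B - E.A) + s * Real.log c := by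
      intro s
      rw [hI s, Real.log_mul (by linarith [E.hAB] : E.B - E.A ≠ 0)
        (Real.rpow_pos_of_pos hc s).ne', Real.log_rpow hc]
    refine ⟨(1 / (1 - q)) * ((q - 1) * Real.log c),
      (1 / (1 - q)) * (Real.log (E.B - E.A) + Real.log c), fun α => ?_⟩
    rw [hlog]
    ring
end

section
/- Lower bound of the LMC–Rényi complexity: let ρ : ℝ → ℝ be a probability density and let p < q with p, q ≠ 1 be such that 0 < W_p[ρ] < ∞ and 0 < W_q[ρ] < ∞. Then R_p[ρ] ≥ R_q[ρ], equivalently C_{p,q}[ρ] ≥ 1. If moreover ρ is a uniform density (a.e. constant equal to 1/a on an interval of length a > 0 and 0 outside), then C_{p,q}[ρ] = 1. -/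
open MeasureTheory Set

/-- Jensen for `exp`: `exp (∫ h) ≤ ∫ exp h` over a probability measure. -/
lemma my_jensen_exp {α : Type*} [MeasurableSpace α] {μ : Measure α} [IsProbabilityMeasure μ]
    {h : α → ℝ} (hint : Integrable h μ) (hexp : Integrable (fun x => Real.exp (h x)) μ) :
    Real.exp (∫ x, h x ∂μ) ≤ ∫ x, Real.exp (h x) ∂μ :=
  convexOn_exp.map_integral_le Real.continuous_exp.continuousOn isClosed_univ
    (Filter.Eventually.of_forall fun _ => mem_univ _) hint (by exact hexp)

/-- Lyapunov inequality, positive exponents. -/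
lemma my_lyapunov {α : Type*} [MeasurableSpace α] {μ : Measure α} [IsProbabilityMeasure μ]
    {f : α → ℝ} (hpos : ∀ᵐ x ∂μ, 0 < f x)
    {s t : ℝ} (hs : 0 < s) (hst : s ≤ t)
    (hfs : Integrable (fun x => f x ^ s) μ) (hft : Integrable (fun x => f x ^ t) μ)
    (hIs : 0 < ∫ x, f x ^ s ∂μ) :
    (1 / s) * Real.log (∫ x, f x ^ s ∂μ) ≤ (1 / t) * Real.log (∫ x, f x ^ t ∂μ) := by
  have ht0 : 0 < t := lt_of_lt_of_le hs hst
  set c : ℝ := t / s with hc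
  have hc1 : 1 ≤ c := (one_le_div hs).2 hst
  have hkey : ∀ᵐ x ∂μ, (f x ^ s) ^ c = f x ^ t := by
    filter_upwards [hpos] with x hx
    rw [← Real.rpow_mul hx.le, hc, mul_div_cancel₀ _ hs.ne']
  have hgi : Integrable ((fun y : ℝ => y ^ c) ∘ fun x => f x ^ s) μ := by
    apply hft.congr
    filter_upwards [hkey] with x hx
    simpa [Function.comp] using hx.symm
  have hJ := (convexOn_rpow hc1).map_integral_le
    (fun y hy => (Real.continuousAt_rpow_const y c (Or.inr (zero_le_one.trans hc1))).continuousWithinAt)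
    isClosed_Ici
    (by filter_upwards [hpos] with x hx; exact (Real.rpow_pos_of_pos hx s).le)
    hfs hgi
  have hJ' : (∫ x, f x ^ s ∂μ) ^ c ≤ ∫ x, f x ^ t ∂μ := by
    refine hJ.trans_eq ?_
    exact integral_congr_ae hkey
  have hlog : c * Real.log (∫ x, f x ^ s ∂μ) ≤ Real.log (∫ x, f x ^ t ∂μ) := by
    rw [← Real.log_rpow hIs]
    exact Real.log_le_log (Real.rpow_pos_of_pos hIs c) hJ'
  have h2 := mul_le_mul_of_nonneg_left hlog (le_of_lt (one_div_pos.mpr ht0))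
  have h3 : (1 / t) * (c * Real.log (∫ x, f x ^ s ∂μ))
      = (1 / s) * Real.log (∫ x, f x ^ s ∂μ) := by
    rw [hc]; field_simp
  linarith

/-- Monotonicity of `s ↦ (1/s) log ∫ f^s` over a probability measure, `f > 0` a.e. -/
lemma my_F_mono {α : Type*} [MeasurableSpace α] {μ : Measure α} [IsProbabilityMeasure μ]
    {f : α → ℝ} (hf : AEMeasurable f μ) (hpos : ∀ᵐ x ∂μ, 0 < f x)
    {s t : ℝ} (hs : s ≠ 0) (ht : t ≠ 0) (hst : s ≤ t)
    (hfs : Integrable (fun x => f x ^ s) μ) (hft : Integrable (fun x => f x ^ t) μ)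
    (hIs : 0 < ∫ x, f x ^ s ∂μ) (hIt : 0 < ∫ x, f x ^ t ∂μ) :
    (1 / s) * Real.log (∫ x, f x ^ s ∂μ) ≤ (1 / t) * Real.log (∫ x, f x ^ t ∂μ) := by
  rcases lt_or_gt_of_ne hs with hsneg | hspos
  · rcases lt_or_gt_of_ne ht with htneg | htpos
    · -- both negative: apply Lyapunov to f⁻¹
      have hinv : ∀ r : ℝ, ∀ᵐ x ∂μ, (f x)⁻¹ ^ (-r) = f x ^ r := by
        intro r
        filter_upwards [hpos] with x hx
        rw [Real.inv_rpow hx.le, Real.rpow_neg hx.le, inv_inv]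
      have h1 : Integrable (fun x => (f x)⁻¹ ^ (-t)) μ := hft.congr ((hinv t).mono fun x hx => hx.symm)
      have h2 : Integrable (fun x => (f x)⁻¹ ^ (-s)) μ := hfs.congr ((hinv s).mono fun x hx => hx.symm)
      have e1 : (∫ x, (f x)⁻¹ ^ (-t) ∂μ) = ∫ x, f x ^ t ∂μ := integral_congr_ae (hinv t)
      have e2 : (∫ x, (f x)⁻¹ ^ (-s) ∂μ) = ∫ x, f x ^ s ∂μ := integral_congr_ae (hinv s)
      have := my_lyapunov (f := fun x => (f x)⁻¹)
        (by filter_upwards [hpos] with x hx; exact inv_pos.2 hx)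
        (s := -t) (t := -s) (by linarith) (by linarith) h1 h2 (by rwa [e1])
      rw [e1, e2] at this
      have hns : 1 / (-s) = -(1 / s) := div_neg 1
      have hnt : 1 / (-t) = -(1 / t) := div_neg 1
      rw [hns, hnt] at this
      linarith
    · -- mixed: s < 0 < t, go through ∫ log f
      have hlog_meas : AEStronglyMeasurable (fun x => Real.log (f x)) μ :=
        (Real.measurable_log.comp_aemeasurable hf).aestronglyMeasurable
      have hbound : ∀ᵐ x ∂μ, ‖Real.log (f x)‖ ≤ f x ^ t / t + f x ^ s / (-s) := by
        filter_upwards [hpos] with x hx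
        have h1 : t * Real.log (f x) ≤ f x ^ t := by
          have := Real.log_le_sub_one_of_pos (Real.rpow_pos_of_pos hx t)
          rw [Real.log_rpow hx] at this
          linarith [(Real.rpow_pos_of_pos hx t)]
        have h2 : s * Real.log (f x) ≤ f x ^ s := by
          have := Real.log_le_sub_one_of_pos (Real.rpow_pos_of_pos hx s)
          rw [Real.log_rpow hx] at this
          linarith [(Real.rpow_pos_of_pos hx s)]
        have ha : Real.log (f x) ≤ f x ^ t / t := by
          rw [le_div_iff₀ htpos]; linarith
        have hb : -Real.log (f x) ≤ f x ^ s / (-s) := by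
          rw [le_div_iff₀ (by linarith : (0:ℝ) < -s)]; nlinarith
        have hta : 0 ≤ f x ^ t / t := div_nonneg (Real.rpow_pos_of_pos hx t).le htpos.le
        have hsb : 0 ≤ f x ^ s / (-s) := div_nonneg (Real.rpow_pos_of_pos hx s).le (by linarith)
        rw [Real.norm_eq_abs, abs_le]
        constructor <;> linarith
      have hlog_int : Integrable (fun x => Real.log (f x)) μ :=
        Integrable.mono' ((hft.div_const t).add (hfs.div_const (-s))) hlog_meas hbound
      set I := ∫ x, Real.log (f x) ∂μ with hI
      have key : ∀ r : ℝ, Integrable (fun x => f x ^ r) μ → (0 < ∫ x, f x ^ r ∂μ) →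
          r * I ≤ Real.log (∫ x, f x ^ r ∂μ) := by
        intro r hint hpos'
        have hae : ∀ᵐ x ∂μ, Real.exp (r * Real.log (f x)) = f x ^ r := by
          filter_upwards [hpos] with x hx
          rw [Real.rpow_def_of_pos hx, mul_comm]
        have hexp : Integrable (fun x => Real.exp (r * Real.log (f x))) μ :=
          hint.congr (hae.mono fun x hx => hx.symm)
        have hJ := my_jensen_exp (hlog_int.const_mul r) hexp
        rw [integral_congr_ae hae, integral_const_mul] at hJ
        exact (Real.le_log_iff_exp_le hpos').2 hJ
      have hks := key s hfs hIs
      have hkt := key t hft hIt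
      have hA : (1 / s) * Real.log (∫ x, f x ^ s ∂μ) ≤ I := by
        have h' := mul_le_mul_of_nonpos_left hks (one_div_neg.mpr hsneg).le
        rw [← mul_assoc, one_div_mul_cancel hs, one_mul] at h'
        exact h'
      have hB : I ≤ (1 / t) * Real.log (∫ x, f x ^ t ∂μ) := by
        have h' := mul_le_mul_of_nonneg_left hkt (one_div_pos.2 htpos).le
        rw [← mul_assoc, one_div_mul_cancel ht, one_mul] at h'
        exact h'
      linarith
  · exact my_lyapunov hpos hspos hst hfs hft hIs

/-- **Lower bound of the LMC–Rényi complexity**: for a probability density `ρ` and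
`p < q` (`p, q ≠ 1`) with `0 < W_p[ρ] < ∞` and `0 < W_q[ρ] < ∞` (entropic moments taken
over the support of `ρ`), one has `R_p[ρ] ≥ R_q[ρ]`, equivalently
`C_{p,q}[ρ] = exp(R_p[ρ] − R_q[ρ]) ≥ 1`; and if `ρ` is a uniform density (a.e. equal to
`1/a` on an interval of length `a > 0` and `0` outside) then `C_{p,q}[ρ] = 1`. -/
theorem lmc_renyi_lower_bound (ρ : ℝ → ℝ) (hmeas : Measurable ρ)
    (hnn : ∀ x, 0 ≤ ρ x) (htot : (∫ x, ρ x) = 1)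
    (p q : ℝ) (hpq : p < q) (hp : p ≠ 1) (hq : q ≠ 1)
    (hWp : IntegrableOn (fun x => ρ x ^ p) (Function.support ρ))
    (hWppos : 0 < ∫ x in Function.support ρ, ρ x ^ p)
    (hWq : IntegrableOn (fun x => ρ x ^ q) (Function.support ρ))
    (hWqpos : 0 < ∫ x in Function.support ρ, ρ x ^ q) :
    ((1 / (1 - q)) * Real.log (∫ x in Function.support ρ, ρ x ^ q)
        ≤ (1 / (1 - p)) * Real.log (∫ x in Function.support ρ, ρ x ^ p)
      ∧ 1 ≤ Real.exp ((1 / (1 - p)) * Real.log (∫ x in Function.support ρ, ρ x ^ p)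
          - (1 / (1 - q)) * Real.log (∫ x in Function.support ρ, ρ x ^ q)))
    ∧ (∀ a x₀ : ℝ, 0 < a →
        ρ =ᵐ[volume] (Set.Ioo x₀ (x₀ + a)).indicator (fun _ => 1 / a) →
        Real.exp ((1 / (1 - p)) * Real.log (∫ x in Function.support ρ, ρ x ^ p)
            - (1 / (1 - q)) * Real.log (∫ x in Function.support ρ, ρ x ^ q)) = 1) := by
  set S : Set ℝ := Function.support ρ with hSdef
  have hS : MeasurableSet S := by
    rw [hSdef, Function.support_eq_preimage]
    exact (hmeas (measurableSet_singleton 0)).compl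
  -- ρ is integrable
  have hρi : Integrable ρ volume := by
    by_contra hcon
    rw [integral_undef hcon] at htot; norm_num at htot
  have hSint : (∫ x in S, ρ x) = 1 := by
    rw [setIntegral_eq_integral_of_forall_compl_eq_zero
      (fun x hx => Function.notMem_support.mp hx)]
    exact htot
  -- the probability measure with density ρ on S
  set ν : Measure ℝ := volume.restrict S with hν
  set μ : Measure ℝ := ν.withDensity (fun x => ((ρ x).toNNReal : ENNReal)) with hμ
  have hmeas' : Measurable fun x => (ρ x).toNNReal := hmeas.real_toNNReal
  have hprob : IsProbabilityMeasure μ := by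
    constructor
    rw [hμ, withDensity_apply _ MeasurableSet.univ, Measure.restrict_univ]
    have : ∫⁻ x, ((ρ x).toNNReal : ENNReal) ∂ν = ENNReal.ofReal (∫ x, ρ x ∂ν) := by
      rw [ofReal_integral_eq_lintegral_ofReal (hρi.restrict)
        (Filter.Eventually.of_forall hnn)]
      rfl
    rw [this, hν, hSint]
    simp
  -- a.e. positivity of ρ under μ
  have hpos : ∀ᵐ x ∂μ, 0 < ρ x := by
    rw [hμ, ae_withDensity_iff hmeas'.coe_nnreal_ennreal]
    filter_upwards with x hx
    rcases lt_or_eq_of_le (hnn x) with h | h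
    · exact h
    · exfalso; apply hx; simp [← h]
  -- transfer of integrals and integrability
  have hconv : ∀ t : ℝ, ∀ᵐ x ∂ν, (ρ x).toNNReal • ρ x ^ (t - 1) = ρ x ^ t := by
    intro t
    filter_upwards [ae_restrict_mem hS] with x hx
    have hx' : 0 < ρ x := lt_of_le_of_ne (hnn x) (Ne.symm hx)
    calc (ρ x).toNNReal • ρ x ^ (t - 1) = ρ x ^ (1:ℝ) * ρ x ^ (t - 1) := by
          rw [NNReal.smul_def, smul_eq_mul, Real.coe_toNNReal _ (hnn x), Real.rpow_one]
      _ = ρ x ^ (1 + (t - 1)) := (Real.rpow_add hx' _ _).symm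
      _ = ρ x ^ t := by norm_num
  have hint : ∀ t : ℝ, IntegrableOn (fun x => ρ x ^ t) S →
      Integrable (fun x => ρ x ^ (t - 1)) μ := by
    intro t hti
    rw [hμ, integrable_withDensity_iff_integrable_smul hmeas']
    exact hti.congr ((hconv t).mono fun x hx => hx.symm)
  have heqint : ∀ t : ℝ, (∫ x, ρ x ^ (t - 1) ∂μ) = ∫ x in S, ρ x ^ t := by
    intro t
    rw [hμ, integral_withDensity_eq_integral_smul hmeas']
    exact integral_congr_ae (hconv t)
  -- main monotonicity
  have hmain := my_F_mono (μ := μ) (f := ρ) hmeas.aemeasurable hpos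
    (s := p - 1) (t := q - 1) (sub_ne_zero.2 hp) (sub_ne_zero.2 hq) (by linarith)
    (hint p hWp) (hint q hWq)
    (by rw [heqint p]; exact hWppos) (by rw [heqint q]; exact hWqpos)
  rw [heqint p, heqint q] at hmain
  have hp1 : 1 / (1 - p) = -(1 / (p - 1)) := by
    rw [← neg_sub p 1, div_neg]
  have hq1 : 1 / (1 - q) = -(1 / (q - 1)) := by
    rw [← neg_sub q 1, div_neg]
  have hfirst : (1 / (1 - q)) * Real.log (∫ x in S, ρ x ^ q)
      ≤ (1 / (1 - p)) * Real.log (∫ x in S, ρ x ^ p) := by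
    rw [hp1, hq1]; linarith
  refine ⟨⟨hfirst, Real.one_le_exp (by linarith)⟩, ?_⟩
  -- uniform density case
  intro a x₀ ha heq
  have hne : (1 : ℝ) / a ≠ 0 := by positivity
  have hset : S =ᵐ[volume] Set.Ioo x₀ (x₀ + a) := by
    rw [Filter.eventuallyEq_set]
    filter_upwards [heq] with x hx
    rw [hSdef, Function.mem_support, hx]
    by_cases hmem : x ∈ Set.Ioo x₀ (x₀ + a)
    · simp [indicator_of_mem hmem, hmem, ha.ne']
    · simp [indicator_of_notMem hmem, hmem]
  have hW : ∀ t : ℝ, (∫ x in S, ρ x ^ t) = a ^ (1 - t) := by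
    intro t
    rw [setIntegral_congr_set hset]
    have : (∫ x in Set.Ioo x₀ (x₀ + a), ρ x ^ t)
        = ∫ x in Set.Ioo x₀ (x₀ + a), (1 / a) ^ t := by
      apply setIntegral_congr_ae measurableSet_Ioo
      filter_upwards [heq] with x hx hmem
      rw [hx, indicator_of_mem hmem]
    rw [this, setIntegral_const, measureReal_def, Real.volume_Ioo]
    have hfix : x₀ + a - x₀ = a := by ring
    rw [hfix, ENNReal.toReal_ofReal ha.le, smul_eq_mul, one_div,
      Real.inv_rpow ha.le, ← Real.rpow_neg ha.le,
      show (1 : ℝ) - t = 1 + (-t) by ring, Real.rpow_add ha, Real.rpow_one]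
  have hlog : ∀ t : ℝ, t ≠ 1 → (1 / (1 - t)) * Real.log (∫ x in S, ρ x ^ t) = Real.log a := by
    intro t htne
    rw [hW t, Real.log_rpow ha, ← mul_assoc, one_div,
      inv_mul_cancel₀ (sub_ne_zero.2 (Ne.symm htne)), one_mul]
  rw [hlog p hp, hlog q hq, sub_self, Real.exp_zero]
end

section
/- Monotonicity of the LMC–Rényi complexity under differential-escort transformations (Theorem 1): let ρ be a probability density, let p < q with p, q ≠ 1, and for α ∈ ℝ set p_α = 1+α(p−1), q_α = 1+α(q−1) and G(α) = (α/(1−p_α)) log W_{p_α}[ρ] − (α/(1−q_α)) log W_{q_α}[ρ] (so that exp(G(α)) = C_{p,q}[ρ_α], the LMC–Rényi complexity of the differential-escort density ρ_α). Then on the set of α > 0 where W_{p_α}[ρ] and W_{q_α}[ρ] are finite and positive (and p_α, q_α ≠ 1), G is nonnegative and nondecreasing; symmetrically, on the set of α < 0 where these moments are finite and positive, G is nonnegative and nonincreasing. Consequently C_{p,q}[ρ_{α'}] ≥ C_{p,q}[ρ_α] ≥ 1 whenever α' ≥ α > 0 or α' ≤ α < 0. -/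
open MeasureTheory Set ENNReal

private noncomputable def Flog (ρ : ℝ → ℝ) (s : ℝ) : ℝ :=
  Real.log (∫ x in Function.support ρ, ρ x ^ s)

private def EMCond (ρ : ℝ → ℝ) (s : ℝ) : Prop :=
  IntegrableOn (fun x => ρ x ^ s) (Function.support ρ)
    ∧ 0 < ∫ x in Function.support ρ, ρ x ^ s

/-- Lyapunov (log-convexity of entropic moments) via Hölder. -/
private lemma lyapunov (ρ : ℝ → ℝ) (hmeas : Measurable ρ) (hnn : ∀ x, 0 ≤ ρ x)
    {u v w : ℝ} (huv : u < v) (hvw : v < w)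
    (hu : EMCond ρ u) (hv : EMCond ρ v) (hw : EMCond ρ w) :
    Flog ρ v * (w - u) ≤ Flog ρ u * (w - v) + Flog ρ w * (v - u) := by
  have hsupp : MeasurableSet (Function.support ρ) := by
    have h : Function.support ρ = ρ ⁻¹' ({0}ᶜ) := by
      ext x; simp [Function.mem_support]
    rw [h]; exact hmeas (measurableSet_singleton 0).compl
  set μ := volume.restrict (Function.support ρ) with hμ
  set θ : ℝ := (w - v) / (w - u) with hθ
  have hwu : 0 < w - u := by linarith
  have hθ0 : 0 < θ := div_pos (by linarith) hwu
  have hθ1 : θ < 1 := by rw [hθ, div_lt_one hwu]; linarith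
  have hθ1' : 0 < 1 - θ := by linarith
  set L : ℝ → ℝ≥0∞ := fun s => ∫⁻ x, ENNReal.ofReal (ρ x ^ s) ∂μ with hL
  have hms : ∀ s : ℝ, Measurable fun x => ρ x ^ s := fun s => hmeas.pow measurable_const
  have hIL : ∀ s : ℝ, IntegrableOn (fun x => ρ x ^ s) (Function.support ρ) →
      (∫ x in Function.support ρ, ρ x ^ s) = (L s).toReal ∧ L s ≠ ⊤ := by
    intro s hs
    constructor
    · exact integral_eq_lintegral_of_nonneg_ae
        (Filter.Eventually.of_forall fun x => Real.rpow_nonneg (hnn x) s)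
        (hms s).aestronglyMeasurable
    · have h2 := hs.2
      rw [hasFiniteIntegral_iff_ofReal
        (Filter.Eventually.of_forall fun x => Real.rpow_nonneg (hnn x) s)] at h2
      exact h2.ne
  obtain ⟨hIu, hLu⟩ := hIL u hu.1
  obtain ⟨hIv, hLv⟩ := hIL v hv.1
  obtain ⟨hIw, hLw⟩ := hIL w hw.1
  have key : L v ≤ (L u) ^ θ * (L w) ^ (1 - θ) := by
    have hconj : Real.HolderConjugate (1/θ) (1/(1-θ)) := by
      rw [Real.holderConjugate_iff]
      constructor
      · rw [lt_div_iff₀ hθ0]; linarith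
      · rw [one_div, inv_inv, one_div, inv_inv]; ring
    have hfm : Measurable fun x => (ENNReal.ofReal (ρ x ^ u)) ^ θ :=
      ((hms u).ennreal_ofReal).pow measurable_const
    have hgm : Measurable fun x => (ENNReal.ofReal (ρ x ^ w)) ^ (1-θ) :=
      ((hms w).ennreal_ofReal).pow measurable_const
    have hpt : ∀ x ∈ Function.support ρ,
        ENNReal.ofReal (ρ x ^ v)
          = (ENNReal.ofReal (ρ x ^ u)) ^ θ * (ENNReal.ofReal (ρ x ^ w)) ^ (1-θ) := by
      intro x hx
      have hρ : 0 < ρ x := lt_of_le_of_ne (hnn x) (Ne.symm hx)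
      have h1 : ρ x ^ v = (ρ x ^ u) ^ θ * (ρ x ^ w) ^ (1-θ) := by
        rw [← Real.rpow_mul hρ.le, ← Real.rpow_mul hρ.le, ← Real.rpow_add hρ]
        congr 1
        rw [hθ]
        field_simp
        ring
      rw [h1, ENNReal.ofReal_mul (Real.rpow_nonneg (Real.rpow_nonneg (hnn x) u) θ),
        ENNReal.ofReal_rpow_of_nonneg (Real.rpow_nonneg (hnn x) u) hθ0.le,
        ENNReal.ofReal_rpow_of_nonneg (Real.rpow_nonneg (hnn x) w) hθ1'.le]
    have hLv' : L v = ∫⁻ x, ((fun x => (ENNReal.ofReal (ρ x ^ u)) ^ θ) x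
        * (fun x => (ENNReal.ofReal (ρ x ^ w)) ^ (1-θ)) x) ∂μ :=
      setLIntegral_congr_fun hsupp (fun x hx => hpt x hx)
    have hH := ENNReal.lintegral_mul_le_Lp_mul_Lq μ hconj
      hfm.aemeasurable hgm.aemeasurable
    rw [hLv']
    refine le_trans hH (le_of_eq ?_)
    have e1 : ∀ x : ℝ, ((ENNReal.ofReal (ρ x ^ u)) ^ θ) ^ ((1:ℝ)/θ)
        = ENNReal.ofReal (ρ x ^ u) := by
      intro x
      rw [← ENNReal.rpow_mul, mul_one_div_cancel hθ0.ne', ENNReal.rpow_one]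
    have e2 : ∀ x : ℝ, ((ENNReal.ofReal (ρ x ^ w)) ^ (1-θ)) ^ ((1:ℝ)/(1-θ))
        = ENNReal.ofReal (ρ x ^ w) := by
      intro x
      rw [← ENNReal.rpow_mul, mul_one_div_cancel hθ1'.ne', ENNReal.rpow_one]
    have d1 : (1:ℝ)/((1:ℝ)/θ) = θ := one_div_one_div θ
    have d2 : (1:ℝ)/((1:ℝ)/(1-θ)) = 1-θ := one_div_one_div (1-θ)
    simp only [e1, e2, d1, d2, hL]
  have hRne : (L u) ^ θ * (L w) ^ (1-θ) ≠ ⊤ :=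
    ENNReal.mul_ne_top (ENNReal.rpow_ne_top_of_nonneg hθ0.le hLu)
      (ENNReal.rpow_ne_top_of_nonneg hθ1'.le hLw)
  have hreal : (∫ x in Function.support ρ, ρ x ^ v)
      ≤ (∫ x in Function.support ρ, ρ x ^ u) ^ θ
        * (∫ x in Function.support ρ, ρ x ^ w) ^ (1-θ) := by
    rw [hIu, hIv, hIw, ENNReal.toReal_rpow, ENNReal.toReal_rpow, ← ENNReal.toReal_mul]
    exact ENNReal.toReal_mono hRne key
  have hlog : Flog ρ v ≤ θ * Flog ρ u + (1-θ) * Flog ρ w := by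
    have hrpos : 0 < (∫ x in Function.support ρ, ρ x ^ u) ^ θ
        * (∫ x in Function.support ρ, ρ x ^ w) ^ (1-θ) :=
      mul_pos (Real.rpow_pos_of_pos hu.2 θ) (Real.rpow_pos_of_pos hw.2 (1-θ))
    simp only [Flog]
    calc Real.log (∫ x in Function.support ρ, ρ x ^ v)
        ≤ Real.log ((∫ x in Function.support ρ, ρ x ^ u) ^ θ
          * (∫ x in Function.support ρ, ρ x ^ w) ^ (1-θ)) :=
          (Real.log_le_log_iff hv.2 hrpos).mpr hreal
      _ = θ * Real.log (∫ x in Function.support ρ, ρ x ^ u)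
          + (1-θ) * Real.log (∫ x in Function.support ρ, ρ x ^ w) := by
          rw [Real.log_mul (Real.rpow_pos_of_pos hu.2 θ).ne'
            (Real.rpow_pos_of_pos hw.2 (1-θ)).ne',
            Real.log_rpow hu.2, Real.log_rpow hw.2]
  have h1 : θ * (w-u) = w - v := by rw [hθ]; field_simp
  have h2 : (1-θ) * (w-u) = v - u := by rw [hθ]; field_simp; ring
  have hmul := mul_le_mul_of_nonneg_right hlog hwu.le
  calc Flog ρ v * (w - u) ≤ (θ * Flog ρ u + (1-θ) * Flog ρ w) * (w - u) := hmul
    _ = Flog ρ u * (θ * (w-u)) + Flog ρ w * ((1-θ) * (w-u)) := by ring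
    _ = Flog ρ u * (w - v) + Flog ρ w * (v - u) := by rw [h1, h2]

/-- Slope comparison for the convex function `s ↦ log W_s`. -/
private lemma slope_master (ρ : ℝ → ℝ) (hmeas : Measurable ρ) (hnn : ∀ x, 0 ≤ ρ x)
    {x1 x2 y1 y2 : ℝ}
    (m1 : EMCond ρ x1) (m2 : EMCond ρ x2) (m3 : EMCond ρ y1) (m4 : EMCond ρ y2)
    (h12 : x1 < x2) (h34 : y1 < y2) (h13 : x1 ≤ y1) (h24 : x2 ≤ y2) :
    (Flog ρ x2 - Flog ρ x1) * (y2 - y1) ≤ (Flog ρ y2 - Flog ρ y1) * (x2 - x1) := by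
  have d1 : 0 < x2 - x1 := by linarith
  have d3 : 0 < y2 - y1 := by linarith
  have d2 : 0 < y2 - x1 := by linarith
  have c1 : (Flog ρ x2 - Flog ρ x1) * (y2 - x1) ≤ (Flog ρ y2 - Flog ρ x1) * (x2 - x1) := by
    rcases eq_or_lt_of_le h24 with h | h
    · rw [h]
    · have h' := lyapunov ρ hmeas hnn h12 h m1 m2 m4
      nlinarith [h']
  have c2 : (Flog ρ y2 - Flog ρ x1) * (y2 - y1) ≤ (Flog ρ y2 - Flog ρ y1) * (y2 - x1) := by
    rcases eq_or_lt_of_le h13 with h | h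
    · rw [h]
    · have h' := lyapunov ρ hmeas hnn h h34 m1 m3 m4
      nlinarith [h']
  have e1 : (Flog ρ x2 - Flog ρ x1) / (x2 - x1) ≤ (Flog ρ y2 - Flog ρ x1) / (y2 - x1) := by
    rw [div_le_div_iff₀ d1 d2]; linarith [c1]
  have e2 : (Flog ρ y2 - Flog ρ x1) / (y2 - x1) ≤ (Flog ρ y2 - Flog ρ y1) / (y2 - y1) := by
    rw [div_le_div_iff₀ d2 d3]; linarith [c2]
  have e3 := e1.trans e2
  rw [div_le_div_iff₀ d1 d3] at e3
  exact e3

private lemma div_le_div_of_key {u v a b : ℝ} (ha : a ≠ 0) (hb : b ≠ 0)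
    (h : u * b * (a*b) ≤ v * a * (a*b)) : u / a ≤ v / b := by
  have hab : a * b ≠ 0 := mul_ne_zero ha hb
  have hsq : 0 < (a*b) * (a*b) := mul_self_pos.mpr hab
  have h1 : u / a = u * b * (a*b) / ((a*b) * (a*b)) := by field_simp
  have h2 : v / b = v * a * (a*b) / ((a*b) * (a*b)) := by field_simp
  rw [h1, h2]
  exact div_le_div_of_nonneg_right h hsq.le

/-- Core monotonicity: for `0 ≤ α < α'` the complexity-type functional is monotone. -/
private lemma aux_main (ρ : ℝ → ℝ) (hmeas : Measurable ρ) (hnn : ∀ x, 0 ≤ ρ x)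
    (a b : ℝ) (hab : a < b) (ha : a ≠ 0) (hb : b ≠ 0)
    (α α' : ℝ) (hα : 0 ≤ α) (hαα' : α < α')
    (hP : EMCond ρ (1 + α * a)) (hQ : EMCond ρ (1 + α * b))
    (hP' : EMCond ρ (1 + α' * a)) (hQ' : EMCond ρ (1 + α' * b)) :
    Flog ρ (1 + α * b) / b - Flog ρ (1 + α * a) / a
      ≤ Flog ρ (1 + α' * b) / b - Flog ρ (1 + α' * a) / a := by
  have hα' : 0 < α' := lt_of_le_of_lt hα hαα'
  have hd : 0 < α' - α := by linarith
  have main : (Flog ρ (1 + α' * a) - Flog ρ (1 + α * a)) / a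
      ≤ (Flog ρ (1 + α' * b) - Flog ρ (1 + α * b)) / b := by
    apply div_le_div_of_key ha hb
    rcases lt_or_gt_of_ne ha with haneg | hapos
    · rcases lt_or_gt_of_ne hb with hbneg | hbpos
      · -- a < b < 0 : pairs (P', P) and (Q', Q)
        have M := slope_master ρ hmeas hnn hP' hP hQ' hQ
          (by nlinarith) (by nlinarith) (by nlinarith) (by nlinarith)
        have key0 : (Flog ρ (1 + α' * a) - Flog ρ (1 + α * a)) * b
            ≤ (Flog ρ (1 + α' * b) - Flog ρ (1 + α * b)) * a := by
          apply le_of_mul_le_mul_right _ hd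
          nlinarith [M]
        have habp : (0:ℝ) ≤ a * b := by nlinarith
        exact mul_le_mul_of_nonneg_right key0 habp
      · -- a < 0 < b : pairs (P', P) and (Q, Q')
        have M := slope_master ρ hmeas hnn hP' hP hQ hQ'
          (by nlinarith) (by nlinarith) (by nlinarith) (by nlinarith)
        have key0 : (Flog ρ (1 + α' * b) - Flog ρ (1 + α * b)) * a
            ≤ (Flog ρ (1 + α' * a) - Flog ρ (1 + α * a)) * b := by
          apply le_of_mul_le_mul_right _ hd
          nlinarith [M]
        have habn : a * b ≤ 0 := by nlinarith
        exact mul_le_mul_of_nonpos_right key0 habn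
    · -- 0 < a < b : pairs (P, P') and (Q, Q')
      have hbpos : 0 < b := lt_trans hapos hab
      have M := slope_master ρ hmeas hnn hP hP' hQ hQ'
        (by nlinarith) (by nlinarith) (by nlinarith) (by nlinarith)
      have key0 : (Flog ρ (1 + α' * a) - Flog ρ (1 + α * a)) * b
          ≤ (Flog ρ (1 + α' * b) - Flog ρ (1 + α * b)) * a := by
        apply le_of_mul_le_mul_right _ hd
        nlinarith [M]
      have habp : (0:ℝ) ≤ a * b := by positivity
      exact mul_le_mul_of_nonneg_right key0 habp
  rw [sub_div, sub_div] at main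
  linarith [main]

/-- **Monotonicity of the LMC–Rényi complexity under differential-escort transformations**
(Theorem 1): for a probability density `ρ` and `p < q` (`p, q ≠ 1`), set
`p_α = 1+α(p-1)`, `q_α = 1+α(q-1)` and
`G(α) = (α/(1-p_α)) log W_{p_α}[ρ] − (α/(1-q_α)) log W_{q_α}[ρ]`, so that
`exp(G(α)) = C_{p,q}[ρ_α]`.  On the set of `α > 0` where `W_{p_α}[ρ], W_{q_α}[ρ]` are
finite and positive (and `p_α, q_α ≠ 1`), `G` is nonnegative and nondecreasing; on the
set of `α < 0` where these moments are finite and positive, `G` is nonnegative and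
nonincreasing.  Hence `C_{p,q}[ρ_{α'}] ≥ C_{p,q}[ρ_α] ≥ 1` for `α' ≥ α > 0` or
`α' ≤ α < 0`. -/
theorem lmc_renyi_monotonicity (ρ : ℝ → ℝ) (hmeas : Measurable ρ)
    (hnn : ∀ x, 0 ≤ ρ x) (htot : (∫ x, ρ x) = 1)
    (p q : ℝ) (hpq : p < q) (hp : p ≠ 1) (hq : q ≠ 1)
    (W : ℝ → ℝ) (hW : ∀ s, W s = ∫ x in Function.support ρ, ρ x ^ s)
    (G : ℝ → ℝ)
    (hG : ∀ α, G α = (α / (1 - (1 + α * (p - 1)))) * Real.log (W (1 + α * (p - 1)))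
        - (α / (1 - (1 + α * (q - 1)))) * Real.log (W (1 + α * (q - 1))))
    (S : Set ℝ)
    (hS : S = {α : ℝ | IntegrableOn (fun x => ρ x ^ (1 + α * (p - 1))) (Function.support ρ)
        ∧ 0 < W (1 + α * (p - 1))
        ∧ IntegrableOn (fun x => ρ x ^ (1 + α * (q - 1))) (Function.support ρ)
        ∧ 0 < W (1 + α * (q - 1))
        ∧ 1 + α * (p - 1) ≠ 1 ∧ 1 + α * (q - 1) ≠ 1}) :
    (∀ α ∈ S, 0 < α → 0 ≤ G α)
    ∧ (∀ α ∈ S, ∀ α' ∈ S, 0 < α → α ≤ α' → G α ≤ G α')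
    ∧ (∀ α ∈ S, α < 0 → 0 ≤ G α)
    ∧ (∀ α ∈ S, ∀ α' ∈ S, α < 0 → α' ≤ α → G α ≤ G α') := by
  have hp1 : p - 1 ≠ 0 := sub_ne_zero.2 hp
  have hq1 : q - 1 ≠ 0 := sub_ne_zero.2 hq
  have hab : p - 1 < q - 1 := by linarith
  have hGF : ∀ α : ℝ, α ≠ 0 →
      G α = Flog ρ (1 + α * (q - 1)) / (q - 1) - Flog ρ (1 + α * (p - 1)) / (p - 1) := by
    intro α hα0
    rw [hG, hW, hW]
    have c1 : α / (1 - (1 + α * (p - 1))) = -(1 / (p - 1)) := by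
      rw [show (1 - (1 + α * (p - 1))) = -(α * (p - 1)) by ring, div_neg, neg_inj]
      rw [eq_div_iff hp1]
      field_simp
    have c2 : α / (1 - (1 + α * (q - 1))) = -(1 / (q - 1)) := by
      rw [show (1 - (1 + α * (q - 1))) = -(α * (q - 1)) by ring, div_neg, neg_inj]
      rw [eq_div_iff hq1]
      field_simp
    rw [c1, c2]
    simp only [Flog]
    ring
  have hρint : Integrable ρ := by
    by_contra h
    rw [integral_undef h] at htot
    exact one_ne_zero htot.symm
  have hsupp : MeasurableSet (Function.support ρ) := by
    have h : Function.support ρ = ρ ⁻¹' ({0}ᶜ) := by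
      ext x; simp [Function.mem_support]
    rw [h]; exact hmeas (measurableSet_singleton 0).compl
  have hone : (∫ x in Function.support ρ, ρ x ^ (1:ℝ)) = 1 := by
    have h1 : (∫ x in Function.support ρ, ρ x ^ (1:ℝ))
        = ∫ x in Function.support ρ, ρ x := by
      apply setIntegral_congr_fun hsupp
      intro x _
      exact Real.rpow_one _
    rw [h1, setIntegral_eq_integral_of_forall_compl_eq_zero
      (fun x hx => Function.notMem_support.mp hx)]
    exact htot
  have hFone : Flog ρ 1 = 0 := by
    simp only [Flog]
    rw [hone, Real.log_one]
  have hcond1 : EMCond ρ 1 := by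
    constructor
    · have h : (fun x => ρ x ^ (1:ℝ)) = ρ := by funext x; exact Real.rpow_one _
      unfold IntegrableOn
      rw [h]
      exact hρint.integrableOn
    · rw [hone]; norm_num
  have hmem : ∀ α ∈ S, EMCond ρ (1 + α * (p - 1)) ∧ EMCond ρ (1 + α * (q - 1)) := by
    intro α hαS
    rw [hS] at hαS
    obtain ⟨h1, h2, h3, h4, _, _⟩ := hαS
    rw [hW] at h2
    rw [hW] at h4
    exact ⟨⟨h1, h2⟩, ⟨h3, h4⟩⟩
  refine ⟨?_, ?_, ?_, ?_⟩
  · -- positivity for α > 0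
    intro α hαS hα
    obtain ⟨hP, hQ⟩ := hmem α hαS
    have haux := aux_main ρ hmeas hnn (p-1) (q-1) hab hp1 hq1 0 α le_rfl hα
      (by rw [show (1:ℝ) + 0 * (p-1) = 1 by ring]; exact hcond1)
      (by rw [show (1:ℝ) + 0 * (q-1) = 1 by ring]; exact hcond1)
      hP hQ
    rw [show (1:ℝ) + 0 * (p-1) = 1 by ring, show (1:ℝ) + 0 * (q-1) = 1 by ring,
      hFone] at haux
    rw [hGF α hα.ne']
    simp only [zero_div] at haux
    linarith [haux]
  · -- monotonicity for 0 < α ≤ α'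
    intro α hαS α' hα'S hα hle
    rcases eq_or_lt_of_le hle with h | h
    · rw [h]
    · obtain ⟨hP, hQ⟩ := hmem α hαS
      obtain ⟨hP', hQ'⟩ := hmem α' hα'S
      have haux := aux_main ρ hmeas hnn (p-1) (q-1) hab hp1 hq1 α α' hα.le h
        hP hQ hP' hQ'
      rw [hGF α hα.ne', hGF α' (by linarith : α' ≠ 0)]
      linarith [haux]
  · -- positivity for α < 0
    intro α hαS hα
    obtain ⟨hP, hQ⟩ := hmem α hαS
    have haux := aux_main ρ hmeas hnn (-(q-1)) (-(p-1)) (by linarith)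
      (neg_ne_zero.mpr hq1) (neg_ne_zero.mpr hp1) 0 (-α) le_rfl (by linarith)
      (by rw [show (1:ℝ) + 0 * -(q-1) = 1 by ring]; exact hcond1)
      (by rw [show (1:ℝ) + 0 * -(p-1) = 1 by ring]; exact hcond1)
      (by rw [show (1:ℝ) + -α * -(q-1) = 1 + α * (q-1) by ring]; exact hQ)
      (by rw [show (1:ℝ) + -α * -(p-1) = 1 + α * (p-1) by ring]; exact hP)
    rw [show (1:ℝ) + 0 * -(q-1) = 1 by ring, show (1:ℝ) + 0 * -(p-1) = 1 by ring,
      show (1:ℝ) + -α * -(q-1) = 1 + α * (q-1) by ring,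
      show (1:ℝ) + -α * -(p-1) = 1 + α * (p-1) by ring,
      hFone] at haux
    rw [hGF α hα.ne]
    simp only [zero_div, div_neg] at haux
    linarith [haux]
  · -- monotonicity for α' ≤ α < 0
    intro α hαS α' hα'S hα hle
    rcases eq_or_lt_of_le hle with h | h
    · rw [← h]
    · obtain ⟨hP, hQ⟩ := hmem α hαS
      obtain ⟨hP', hQ'⟩ := hmem α' hα'S
      have haux := aux_main ρ hmeas hnn (-(q-1)) (-(p-1)) (by linarith)
        (neg_ne_zero.mpr hq1) (neg_ne_zero.mpr hp1) (-α) (-α') (by linarith) (by linarith)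
        (by rw [show (1:ℝ) + -α * -(q-1) = 1 + α * (q-1) by ring]; exact hQ)
        (by rw [show (1:ℝ) + -α * -(p-1) = 1 + α * (p-1) by ring]; exact hP)
        (by rw [show (1:ℝ) + -α' * -(q-1) = 1 + α' * (q-1) by ring]; exact hQ')
        (by rw [show (1:ℝ) + -α' * -(p-1) = 1 + α' * (p-1) by ring]; exact hP')
      rw [show (1:ℝ) + -α * -(q-1) = 1 + α * (q-1) by ring,
        show (1:ℝ) + -α * -(p-1) = 1 + α * (p-1) by ring,
        show (1:ℝ) + -α' * -(q-1) = 1 + α' * (q-1) by ring,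
        show (1:ℝ) + -α' * -(p-1) = 1 + α' * (p-1) by ring] at haux
      rw [hGF α hα.ne, hGF α' (by linarith : α' ≠ 0)]
      simp only [div_neg] at haux
      linarith [haux]
end

section
/- The differential-escort transform of the exponential density is a q-exponential density: let ρ(x) = e^{−x} for x ∈ (0,∞) (and 0 otherwise), and let α > 0 with α ≠ 1. Then the change of variable is y_α(x) = (e^{(α−1)x} − 1)/(α−1), with inverse x_α(u) = log(1 + (α−1)u)/(α−1), the transformed support is Λ_α = (0,∞) if α > 1 and Λ_α = (0, 1/(1−α)) if α < 1, and the differential-escort density equals 𝔈_α[ρ](u) = (1 + (α−1)u)^{α/(1−α)} = e_{(2α−1)/α}(−α u) for u ∈ Λ_α, where e_q(x) = (1 + (1−q)x)_+^{1/(1−q)}. Moreover ∫_{Λ_α} 𝔈_α[ρ](u) du = 1. Equivalently, for every q < 2, 𝔈_{1/(2−q)} applied to the exponential density yields the q-exponential density ℰ_q(u) = e_q(−u/(2−q)). -/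
open MeasureTheory Set

/-- The exponential probability density `ρ(x) = e^{-x}` on `(0, ∞)`, `0` otherwise. -/
noncomputable def expDen : ℝ → ℝ := fun x => if 0 < x then Real.exp (-x) else 0

/-- The q-exponential function `e_q(x) = (1 + (1-q)x)_+^{1/(1-q)}` (`e_1 = exp`). -/
noncomputable def qexp (q x : ℝ) : ℝ :=
  if q = 1 then Real.exp x else max (1 + (1 - q) * x) 0 ^ (1 / (1 - q))

lemma yform (α : ℝ) (hα1 : α ≠ 1) {x : ℝ} (hx : 0 < x) :
    yOf expDen α x = (Real.exp ((α - 1) * x) - 1) / (α - 1) := by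
  have h1 : yOf expDen α x = ∫ t in (0:ℝ)..x, Real.exp ((α - 1) * t) := by
    unfold yOf
    rw [intervalIntegral.integral_of_le hx.le, intervalIntegral.integral_of_le hx.le]
    refine setIntegral_congr_fun measurableSet_Ioc fun t ht => ?_
    simp only [expDen, if_pos ht.1]
    rw [← Real.exp_mul]
    ring_nf
  rw [h1]
  rw [intervalIntegral.integral_comp_mul_left (fun t => Real.exp t) (c := α - 1)]
  · rw [integral_exp, smul_eq_mul, mul_zero, Real.exp_zero]
    ring
  · exact sub_ne_zero.mpr hα1

lemma yimage (α : ℝ) (hα : 0 < α) (hα1 : α ≠ 1) :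
    yOf expDen α '' Set.Ioi (0:ℝ) = {u | 0 < u ∧ 0 < 1 + (α - 1) * u} := by
  have hc : α - 1 ≠ 0 := sub_ne_zero.mpr hα1
  ext u
  constructor
  · rintro ⟨x, hx, rfl⟩
    rw [yform α hα1 hx]
    set c := α - 1 with hcdef
    have he : 0 < Real.exp (c * x) := Real.exp_pos _
    have hx' : (0:ℝ) < x := hx
    constructor
    · rcases lt_or_gt_of_ne hc with h | h
      · have : Real.exp (c * x) < 1 := by
          rw [← Real.exp_zero]
          exact Real.exp_lt_exp.mpr (mul_neg_of_neg_of_pos h hx')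
        exact div_pos_of_neg_of_neg (by linarith) h
      · have : 1 < Real.exp (c * x) := by
          rw [← Real.exp_zero]
          exact Real.exp_lt_exp.mpr (mul_pos h hx')
        exact div_pos (by linarith) h
    · have : 1 + c * ((Real.exp (c * x) - 1) / c) = Real.exp (c * x) := by
        field_simp
        ring
      rw [this]; exact he
  · rintro ⟨hu, hcu⟩
    refine ⟨Real.log (1 + (α - 1) * u) / (α - 1), ?_, ?_⟩
    · set c := α - 1 with hcdef
      rcases lt_or_gt_of_ne hc with h | h
      · have h1 : 1 + c * u < 1 := by nlinarith
        have : Real.log (1 + c * u) < 0 := Real.log_neg hcu h1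
        exact mem_Ioi.mpr (div_pos_of_neg_of_neg this h)
      · have h1 : 1 < 1 + c * u := by nlinarith
        have : 0 < Real.log (1 + c * u) := Real.log_pos h1
        exact mem_Ioi.mpr (div_pos this h)
    · have hx : 0 < Real.log (1 + (α - 1) * u) / (α - 1) := by
        set c := α - 1 with hcdef
        rcases lt_or_gt_of_ne hc with h | h
        · have h1 : 1 + c * u < 1 := by nlinarith
          exact div_pos_of_neg_of_neg (Real.log_neg hcu h1) h
        · have h1 : 1 < 1 + c * u := by nlinarith
          exact div_pos (Real.log_pos h1) h
      rw [yform α hα1 hx]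
      rw [mul_div_cancel₀ _ hc, Real.exp_log hcu]
      field_simp
      ring

lemma yinj (α : ℝ) (hα1 : α ≠ 1) : Set.InjOn (yOf expDen α) (Set.Ioi 0) := by
  intro x hx y hy h
  rw [yform α hα1 hx, yform α hα1 hy] at h
  have hc : α - 1 ≠ 0 := sub_ne_zero.mpr hα1
  field_simp at h
  have h2 : (α - 1) * x = (α - 1) * y := Real.exp_injective (by linarith)
  exact mul_left_cancel₀ hc h2

lemma yinv (α : ℝ) (hα : 0 < α) (hα1 : α ≠ 1) {u : ℝ} (hu : u ∈ yOf expDen α '' Set.Ioi (0:ℝ)) :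
    Function.invFunOn (yOf expDen α) (Set.Ioi 0) u = Real.log (1 + (α - 1) * u) / (α - 1) := by
  have hm := yimage α hα hα1 ▸ hu
  obtain ⟨hu0, hcu⟩ := hm
  have hc : α - 1 ≠ 0 := sub_ne_zero.mpr hα1
  have hx : 0 < Real.log (1 + (α - 1) * u) / (α - 1) := by
    rcases lt_or_gt_of_ne hc with h | h
    · exact div_pos_of_neg_of_neg (Real.log_neg hcu (by nlinarith)) h
    · exact div_pos (Real.log_pos (by nlinarith)) h
  have hy : yOf expDen α (Real.log (1 + (α - 1) * u) / (α - 1)) = u := by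
    rw [yform α hα1 hx, mul_div_cancel₀ _ hc, Real.exp_log hcu]
    field_simp
    ring
  have he : ∃ a ∈ Set.Ioi (0:ℝ), yOf expDen α a = u := hu.imp (fun a ⟨h1, h2⟩ => ⟨h1, h2⟩)
  exact yinj α hα1 (Function.invFunOn_mem he) hx
    ((Function.invFunOn_eq he).trans hy.symm)

lemma escort_val (α : ℝ) (hα : 0 < α) (hα1 : α ≠ 1) {u : ℝ}
    (hu : u ∈ yOf expDen α '' Set.Ioi (0:ℝ)) :
    escortOf expDen (Set.Ioi 0) α u = (1 + (α - 1) * u) ^ (α / (1 - α)) := by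
  have hm := (yimage α hα hα1) ▸ hu
  obtain ⟨hu0, hcu⟩ := hm
  have hc : α - 1 ≠ 0 := sub_ne_zero.mpr hα1
  have hx : 0 < Real.log (1 + (α - 1) * u) / (α - 1) := by
    rcases lt_or_gt_of_ne hc with h | h
    · exact div_pos_of_neg_of_neg (Real.log_neg hcu (by nlinarith)) h
    · exact div_pos (Real.log_pos (by nlinarith)) h
  unfold escortOf
  rw [Set.indicator_of_mem hu, yinv α hα hα1 hu]
  simp only [expDen, if_pos hx]
  rw [← Real.exp_mul, Real.rpow_def_of_pos hcu]
  congr 1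
  have h1a : (1:ℝ) - α ≠ 0 := fun h => hα1 (by linarith)
  field_simp
  ring

lemma escort_qexp (α : ℝ) (hα : 0 < α) (hα1 : α ≠ 1) {u : ℝ}
    (hu : u ∈ yOf expDen α '' Set.Ioi (0:ℝ)) :
    escortOf expDen (Set.Ioi 0) α u = qexp ((2 * α - 1) / α) (-(α * u)) := by
  have hm := (yimage α hα hα1) ▸ hu
  obtain ⟨hu0, hcu⟩ := hm
  have hq : (2 * α - 1) / α ≠ 1 := by
    intro h
    rw [div_eq_one_iff_eq (ne_of_gt hα)] at h
    exact hα1 (by linarith)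
  rw [escort_val α hα hα1 hu]
  unfold qexp
  rw [if_neg hq]
  have h1 : 1 - (2 * α - 1) / α = (1 - α) / α := by field_simp; ring
  rw [h1]
  have h2 : 1 + (1 - α) / α * -(α * u) = 1 + (α - 1) * u := by field_simp; ring
  rw [h2, max_eq_left hcu.le]
  congr 1
  rw [one_div_div]

lemma escort_integral (α : ℝ) (hα : 0 < α) (hα1 : α ≠ 1) :
    (∫ u in yOf expDen α '' Set.Ioi (0:ℝ), escortOf expDen (Set.Ioi 0) α u) = 1 := by
  have hc : α - 1 ≠ 0 := sub_ne_zero.mpr hα1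
  have hderiv : ∀ x ∈ Set.Ioi (0:ℝ),
      HasDerivWithinAt (yOf expDen α) (Real.exp ((α - 1) * x)) (Set.Ioi 0) x := by
    intro x hx
    have hg : HasDerivAt (fun t => (Real.exp ((α - 1) * t) - 1) / (α - 1))
        (Real.exp ((α - 1) * x)) x := by
      have h1 : HasDerivAt (fun t : ℝ => (α - 1) * t) (α - 1) x := by
        simpa using (hasDerivAt_id x).const_mul (α - 1)
      have h2 := (h1.exp.sub_const 1).div_const (α - 1)
      simpa [mul_comm, mul_div_assoc, mul_div_cancel_left₀ _ hc] using h2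
    refine (hg.hasDerivWithinAt).congr (fun t ht => yform α hα1 ht)
      (yform α hα1 hx)
  rw [integral_image_eq_integral_abs_deriv_smul measurableSet_Ioi hderiv (yinj α hα1)]
  have : ∀ x ∈ Set.Ioi (0:ℝ),
      |Real.exp ((α - 1) * x)| • escortOf expDen (Set.Ioi 0) α (yOf expDen α x)
        = Real.exp (-x) := by
    intro x hx
    have him : yOf expDen α x ∈ yOf expDen α '' Set.Ioi (0:ℝ) := ⟨x, hx, rfl⟩
    unfold escortOf
    rw [Set.indicator_of_mem him, (yinj α hα1).leftInvOn_invFunOn hx]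
    simp only [expDen, if_pos (Set.mem_Ioi.mp hx)]
    rw [abs_of_pos (Real.exp_pos _), smul_eq_mul, ← Real.exp_mul, ← Real.exp_add]
    congr 1
    ring
  rw [setIntegral_congr_fun measurableSet_Ioi this]
  exact integral_exp_neg_Ioi_zero

lemma yOf_one : yOf expDen 1 = fun x => x := by
  funext x
  unfold yOf
  simp [Real.rpow_zero]

lemma escort_one {u : ℝ} (hu : u ∈ yOf expDen 1 '' Set.Ioi (0:ℝ)) :
    escortOf expDen (Set.Ioi 0) 1 u = Real.exp (-u) := by
  have him : yOf expDen 1 '' Set.Ioi (0:ℝ) = Set.Ioi 0 := by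
    rw [yOf_one, Set.image_id']
  have hu0 : 0 < u := by rw [him] at hu; exact hu
  have hinv : Function.invFunOn (yOf expDen 1) (Set.Ioi 0) u = u := by
    rw [yOf_one]
    have hinj : Set.InjOn (fun x : ℝ => x) (Set.Ioi 0) := fun a _ b _ h => h
    exact hinj.leftInvOn_invFunOn (Set.mem_Ioi.mpr hu0)
  unfold escortOf
  rw [Set.indicator_of_mem hu, hinv]
  simp only [expDen, if_pos hu0]
  rw [Real.rpow_one]

/-- **The differential-escort transform of the exponential density is a q-exponential
density**: for `α > 0`, `α ≠ 1`, the change of variable is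
`y_α(x) = (e^{(α-1)x} − 1)/(α-1)`, with inverse `x_α(u) = log(1 + (α-1)u)/(α-1)`; the
transformed support is `(0,∞)` if `α > 1` and `(0, 1/(1-α))` if `α < 1`; the transformed
density is `𝔈_α[ρ](u) = (1 + (α-1)u)^{α/(1-α)} = e_{(2α-1)/α}(−αu)` and integrates to `1`.
Equivalently, for every `q < 2`, `𝔈_{1/(2-q)}` maps the exponential density to the
q-exponential density `ℰ_q(u) = e_q(−u/(2-q))`. -/
theorem escort_exponential (α : ℝ) (hα : 0 < α) (hα1 : α ≠ 1) :
    (∀ x ∈ Set.Ioi (0:ℝ), yOf expDen α x = (Real.exp ((α - 1) * x) - 1) / (α - 1))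
    ∧ (∀ u ∈ yOf expDen α '' Set.Ioi (0:ℝ),
        Function.invFunOn (yOf expDen α) (Set.Ioi 0) u
          = Real.log (1 + (α - 1) * u) / (α - 1))
    ∧ (1 < α → yOf expDen α '' Set.Ioi (0:ℝ) = Set.Ioi 0)
    ∧ (α < 1 → yOf expDen α '' Set.Ioi (0:ℝ) = Set.Ioo 0 (1 / (1 - α)))
    ∧ (∀ u ∈ yOf expDen α '' Set.Ioi (0:ℝ),
        escortOf expDen (Set.Ioi 0) α u = (1 + (α - 1) * u) ^ (α / (1 - α))
        ∧ escortOf expDen (Set.Ioi 0) α u = qexp ((2 * α - 1) / α) (-(α * u)))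
    ∧ (∫ u in yOf expDen α '' Set.Ioi (0:ℝ), escortOf expDen (Set.Ioi 0) α u) = 1
    ∧ (∀ q : ℝ, q < 2 → ∀ u ∈ yOf expDen (1 / (2 - q)) '' Set.Ioi (0:ℝ),
        escortOf expDen (Set.Ioi 0) (1 / (2 - q)) u = qexp q (-(u / (2 - q)))) := by
  refine ⟨fun x hx => yform α hα1 hx, fun u hu => yinv α hα hα1 hu, ?_, ?_,
    fun u hu => ⟨escort_val α hα hα1 hu, escort_qexp α hα hα1 hu⟩,
    escort_integral α hα hα1, ?_⟩
  · intro h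
    rw [yimage α hα hα1]
    ext u
    simp only [Set.mem_setOf_eq, Set.mem_Ioi]
    constructor
    · exact fun h => h.1
    · intro hu
      exact ⟨hu, by nlinarith⟩
  · intro h
    rw [yimage α hα hα1]
    ext u
    simp only [Set.mem_setOf_eq, Set.mem_Ioo]
    constructor
    · rintro ⟨h1, h2⟩
      refine ⟨h1, ?_⟩
      rw [lt_div_iff₀ (by linarith : (0:ℝ) < 1 - α)]
      nlinarith
    · rintro ⟨h1, h2⟩
      refine ⟨h1, ?_⟩
      rw [lt_div_iff₀ (by linarith : (0:ℝ) < 1 - α)] at h2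
      nlinarith
  · intro q hq u hu
    have h2q : (2:ℝ) - q ≠ 0 := by intro h; linarith
    by_cases hq1 : q = 1
    · subst hq1
      norm_num at hu ⊢
      rw [escort_one hu]
      unfold qexp
      rw [if_pos rfl]
    · have hβ : (0:ℝ) < 1 / (2 - q) := div_pos one_pos (by linarith)
      have hβ1 : (1:ℝ) / (2 - q) ≠ 1 := by
        intro h
        rw [div_eq_one_iff_eq h2q] at h
        exact hq1 (by linarith)
      have e1 : (2 * (1 / (2 - q)) - 1) / (1 / (2 - q)) = q := by
        field_simp
        ring
      have e2 : 1 / (2 - q) * u = u / (2 - q) := by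
        rw [one_div, inv_mul_eq_div]
      have := escort_qexp (1 / (2 - q)) hβ hβ1 hu
      rw [this, e1, e2]
end

section
/- Closure of the q-exponential family under differential-escort transformations: for q < 2 let ℰ_q(u) = e_q(−u/(2−q)) be the q-exponential probability density (supported on (0,∞) for 1 ≤ q < 2 and on (0, (2−q)/(1−q)) for q < 1). Then for every α > 0, the differential-escort transform satisfies 𝔈_α[ℰ_q] = ℰ_{q̄} with q̄ = 2 + (q−2)/α; in particular 𝔈_{2−q}[ℰ_q] = ℰ_1 is the exponential density, and for any q, q̃ < 2 one has 𝔈_{(2−q)/(2−q̃)}[ℰ_q] = ℰ_{q̃}. -/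
open MeasureTheory Set

/-- The support of the q-exponential density `ℰ_q`: `(0, (2-q)/(1-q))` for `q < 1` and
`(0, ∞)` for `1 ≤ q < 2`. -/
noncomputable def qSupp (q : ℝ) : Set ℝ :=
  if q < 1 then Set.Ioo 0 ((2 - q) / (1 - q)) else Set.Ioi 0

/-- The q-exponential probability density `ℰ_q(u) = e_q(−u/(2-q))` on its support,
`0` outside. -/
noncomputable def qDen (q : ℝ) : ℝ → ℝ :=
  (qSupp q).indicator fun u => qexp q (-(u / (2 - q)))

section Aux

open Filter

lemma qSupp_of_lt {q : ℝ} (h : q < 1) : qSupp q = Ioo 0 ((2 - q) / (1 - q)) := if_pos h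

lemma qSupp_of_ge {q : ℝ} (h : ¬ q < 1) : qSupp q = Ioi 0 := if_neg h

lemma qSupp_subset_Ioi (q : ℝ) : qSupp q ⊆ Ioi 0 := by
  unfold qSupp; split_ifs
  · exact Ioo_subset_Ioi_self
  · exact subset_rfl

lemma Ioc_subset_qSupp {q x : ℝ} (hx : x ∈ qSupp q) : Ioc 0 x ⊆ qSupp q := by
  unfold qSupp at *
  split_ifs at * with h
  · exact fun t ht => ⟨ht.1, lt_of_le_of_lt ht.2 hx.2⟩
  · exact fun t ht => ht.1

lemma base_pos {q : ℝ} (hq : q < 2) {x : ℝ} (hx : x ∈ qSupp q) :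
    0 < 1 - (1 - q) / (2 - q) * x := by
  have h2q : (0:ℝ) < 2 - q := by linarith
  unfold qSupp at hx
  split_ifs at hx with h
  · obtain ⟨h1, h2⟩ := hx
    have h1q : (0:ℝ) < 1 - q := by linarith
    have hxx := (lt_div_iff₀ h1q).mp h2
    have : (1 - q) / (2 - q) * x < 1 := by
      rw [div_mul_eq_mul_div, div_lt_one h2q]; nlinarith
    linarith
  · push_neg at h
    have hx0 : (0:ℝ) < x := hx
    have hd : (1 - q) / (2 - q) ≤ 0 :=
      div_nonpos_iff.mpr (Or.inr ⟨by linarith, h2q.le⟩)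
    nlinarith

lemma qDen_eq {q : ℝ} (hq : q < 2) (hq1 : q ≠ 1) {x : ℝ} (hx : x ∈ qSupp q) :
    qDen q x = (1 - (1 - q) / (2 - q) * x) ^ (1 / (1 - q)) := by
  have harg : 1 + (1 - q) * -(x / (2 - q)) = 1 - (1 - q) / (2 - q) * x := by ring
  rw [qDen, indicator_of_mem hx, qexp, if_neg hq1, harg,
    max_eq_left (base_pos hq hx).le]

lemma qDen_one_eq {x : ℝ} (hx : x ∈ qSupp 1) : qDen 1 x = Real.exp (-x) := by
  rw [qDen, indicator_of_mem hx, qexp, if_pos rfl]; norm_num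

/-- Generic reduction: to identify the escort transform with a target density it
suffices to have a closed form `Y` for the change of variable, identify the image
and check the pointwise identity. -/
lemma escort_eq_of {q q' α : ℝ} (Y : ℝ → ℝ)
    (hY : ∀ x ∈ qSupp q, yOf (qDen q) α x = Y x)
    (himg : Y '' qSupp q = qSupp q')
    (hid : ∀ x ∈ qSupp q, qDen q x ^ α = qexp q' (-(Y x / (2 - q')))) :
    ∀ u, escortOf (qDen q) (qSupp q) α u = qDen q' u := by
  have himg' : yOf (qDen q) α '' qSupp q = qSupp q' := by
    rw [image_congr hY, himg]
  intro u
  by_cases hu : u ∈ qSupp q'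
  · have hu' : u ∈ yOf (qDen q) α '' qSupp q := by rw [himg']; exact hu
    obtain ⟨x, hx, hxu⟩ := hu'
    have hex : ∃ a ∈ qSupp q, yOf (qDen q) α a = u := ⟨x, hx, hxu⟩
    have hmem : Function.invFunOn (yOf (qDen q) α) (qSupp q) u ∈ qSupp q :=
      Function.invFunOn_mem hex
    have heq : yOf (qDen q) α (Function.invFunOn (yOf (qDen q) α) (qSupp q) u) = u :=
      Function.invFunOn_eq hex
    rw [escortOf, indicator_of_mem (by rw [himg']; exact hu),
      hid _ hmem, ← hY _ hmem, heq, qDen, indicator_of_mem hu]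
  · rw [escortOf, indicator_of_notMem (by rw [himg']; exact hu), qDen,
      indicator_of_notMem hu]

/-- Generic FTC computation of `yOf` from an antiderivative. -/
lemma yOf_eq_of {q α : ℝ} {x : ℝ} (hx : x ∈ qSupp q) (Y g : ℝ → ℝ)
    (hder : ∀ t ∈ Icc 0 x, HasDerivAt Y (g t) t)
    (hcont : ContinuousOn g (Icc 0 x))
    (hg : ∀ t ∈ Ioc 0 x, qDen q t ^ (1 - α) = g t)
    (hY0 : Y 0 = 0) :
    yOf (qDen q) α x = Y x := by
  have hx0 : (0:ℝ) < x := qSupp_subset_Ioi q hx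
  rw [yOf]
  have h1 : ∫ t in (0:ℝ)..x, qDen q t ^ (1 - α) = ∫ t in (0:ℝ)..x, g t := by
    apply intervalIntegral.integral_congr_ae
    filter_upwards with t ht
    rw [uIoc_of_le hx0.le] at ht
    exact hg t ht
  rw [h1, intervalIntegral.integral_eq_sub_of_hasDerivAt
      (fun t ht => hder t (by rwa [uIcc_of_le hx0.le] at ht))
      ((hcont.mono (by rw [uIcc_of_le hx0.le])).intervalIntegrable),
    hY0, sub_zero]

lemma strictMonoOn_of_hasDerivAt_pos {Y g : ℝ → ℝ} {D : Set ℝ} (hD : Convex ℝ D)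
    (hder : ∀ t ∈ D, HasDerivAt Y (g t) t) (hpos : ∀ t ∈ interior D, 0 < g t) :
    StrictMonoOn Y D :=
  strictMonoOn_of_deriv_pos hD (fun t ht => (hder t ht).continuousAt.continuousWithinAt)
    (fun t ht => by rw [(hder t (interior_subset ht)).deriv]; exact hpos t ht)

lemma image_Ioo_of_Icc {Y : ℝ → ℝ} {b L : ℝ} (hb : 0 < b)
    (hcont : ContinuousOn Y (Icc 0 b)) (hmono : StrictMonoOn Y (Icc 0 b))
    (hY0 : Y 0 = 0) (hYb : Y b = L) : Y '' Ioo 0 b = Ioo 0 L := by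
  apply Subset.antisymm
  · rintro _ ⟨x, hx, rfl⟩
    constructor
    · rw [← hY0]; exact hmono (left_mem_Icc.mpr hb.le) ⟨hx.1.le, hx.2.le⟩ hx.1
    · rw [← hYb]; exact hmono ⟨hx.1.le, hx.2.le⟩ (right_mem_Icc.mpr hb.le) hx.2
  · have h := intermediate_value_Ioo hb.le hcont
    rwa [hY0, hYb] at h

lemma image_Ioi_of_atTop {Y : ℝ → ℝ}
    (hcont : ContinuousOn Y (Ici 0)) (hmono : StrictMonoOn Y (Ici 0))
    (hY0 : Y 0 = 0) (htop : Tendsto Y atTop atTop) : Y '' Ioi 0 = Ioi 0 := by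
  apply Subset.antisymm
  · rintro _ ⟨x, hx, rfl⟩
    rw [mem_Ioi, ← hY0]
    exact hmono self_mem_Ici (mem_Ici.mpr (le_of_lt hx)) hx
  · intro u hu
    obtain ⟨z, hzu, hz0⟩ :=
      ((htop.eventually (eventually_gt_atTop u)).and (eventually_ge_atTop 0)).exists
    obtain ⟨x, hx, hxu⟩ := intermediate_value_Ioo hz0
      (hcont.mono (Icc_subset_Ici_self)) (by rw [hY0]; exact ⟨hu, hzu⟩)
    exact ⟨x, hx.1, hxu⟩

lemma image_Ioi_of_tendsto {Y : ℝ → ℝ} {L : ℝ}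
    (hcont : ContinuousOn Y (Ici 0)) (hmono : StrictMonoOn Y (Ici 0))
    (hY0 : Y 0 = 0) (hL : Tendsto Y atTop (nhds L)) : Y '' Ioi 0 = Ioo 0 L := by
  have hlt : ∀ x, 0 ≤ x → Y x < L := by
    intro x hx
    have h1 : Y x < Y (x + 1) :=
      hmono (mem_Ici.mpr hx) (mem_Ici.mpr (by linarith)) (by linarith)
    have h2 : Y (x + 1) ≤ L := by
      apply ge_of_tendsto hL
      filter_upwards [eventually_ge_atTop (x + 1)] with z hz
      exact hmono.monotoneOn (mem_Ici.mpr (by linarith)) (mem_Ici.mpr (by linarith)) hz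
    linarith
  apply Subset.antisymm
  · rintro _ ⟨x, hx, rfl⟩
    refine ⟨?_, hlt x (le_of_lt hx)⟩
    rw [← hY0]; exact hmono self_mem_Ici (mem_Ici.mpr (le_of_lt hx)) hx
  · intro u hu
    obtain ⟨z, hzu, hz0⟩ :=
      ((hL.eventually (eventually_gt_nhds hu.2)).and (eventually_ge_atTop 0)).exists
    obtain ⟨x, hx, hxu⟩ := intermediate_value_Ioo hz0
      (hcont.mono (Icc_subset_Ici_self)) (by rw [hY0]; exact ⟨hu.1, hzu⟩)
    exact ⟨x, hx.1, hxu⟩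

lemma image_Ioi_of_atTop_within {Y : ℝ → ℝ} {b : ℝ} (hb : 0 < b)
    (hcont : ContinuousOn Y (Ico 0 b)) (hmono : StrictMonoOn Y (Ico 0 b))
    (hY0 : Y 0 = 0) (htop : Tendsto Y (nhdsWithin b (Iio b)) atTop) :
    Y '' Ioo 0 b = Ioi 0 := by
  apply Subset.antisymm
  · rintro _ ⟨x, hx, rfl⟩
    rw [mem_Ioi, ← hY0]
    exact hmono (left_mem_Ico.mpr hb) ⟨hx.1.le, hx.2⟩ hx.1
  · intro u hu
    have h0 : ∀ᶠ z in nhdsWithin b (Iio b), 0 < z :=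
      ((eventually_gt_nhds hb).filter_mono nhdsWithin_le_nhds)
    have hbb : ∀ᶠ z in nhdsWithin b (Iio b), z < b :=
      eventually_mem_nhdsWithin
    obtain ⟨z, hzu, hz0, hzb⟩ :=
      ((htop.eventually (eventually_gt_atTop u)).and (h0.and hbb)).exists
    obtain ⟨x, hx, hxu⟩ := intermediate_value_Ioo hz0.le
      (hcont.mono (fun t ht => ⟨ht.1, lt_of_le_of_lt ht.2 hzb⟩))
      (by rw [hY0]; exact ⟨hu, hzu⟩)
    exact ⟨x, ⟨hx.1, hx.2.trans hzb⟩, hxu⟩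

lemma hasDerivAt_pow_aux {c r : ℝ} (hc : c ≠ 0) (hr : r ≠ 0) {t : ℝ}
    (h : 0 < 1 - c * t) :
    HasDerivAt (fun s => (1 - (1 - c * s) ^ r) / (c * r)) ((1 - c * t) ^ (r - 1)) t := by
  have h1 : HasDerivAt (fun s : ℝ => 1 - c * s) (-c) t := by
    simpa using ((hasDerivAt_id t).const_mul c).const_sub 1
  have h2 : HasDerivAt (fun s : ℝ => (1 - c * s) ^ r)
      (r * (1 - c * t) ^ (r - 1) * -c) t :=
    by have := (Real.hasDerivAt_rpow_const (p := r) (Or.inl (ne_of_gt h))).comp t h1; exact this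
  have h3 := (h2.const_sub 1).div_const (c * r)
  refine h3.congr_deriv ?_
  field_simp

lemma hasDerivAt_log_aux {c : ℝ} (hc : c ≠ 0) {t : ℝ} (h : 0 < 1 - c * t) :
    HasDerivAt (fun s => -Real.log (1 - c * s) / c) ((1 - c * t)⁻¹) t := by
  have h1 : HasDerivAt (fun s : ℝ => 1 - c * s) (-c) t := by
    simpa using ((hasDerivAt_id t).const_mul c).const_sub 1
  have h2 : HasDerivAt (fun s : ℝ => Real.log (1 - c * s)) ((1 - c * t)⁻¹ * -c) t :=
    by have := (Real.hasDerivAt_log (ne_of_gt h)).comp t h1; exact this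
  have h3 := h2.neg.div_const c
  refine h3.congr_deriv ?_
  field_simp

lemma hasDerivAt_exp_aux (β : ℝ) (t : ℝ) :
    HasDerivAt (fun s => Real.exp (β * s)) (β * Real.exp (β * t)) t := by
  have h1 : HasDerivAt (fun s : ℝ => β * s) β t := by
    simpa using (hasDerivAt_id t).const_mul β
  simpa [mul_comm, Function.comp_def] using (Real.hasDerivAt_exp (β * t)).comp t h1


lemma hasDerivAt_exp_aux2 {β : ℝ} (hβ : β ≠ 0) (t : ℝ) :
    HasDerivAt (fun s => (1 - Real.exp (-β * s)) / β) (Real.exp (-β * t)) t := by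
  have h2 := hasDerivAt_exp_aux (-β) t
  have h3 := (h2.const_sub 1).div_const β
  refine h3.congr_deriv ?_
  field_simp

lemma tendsto_rpow_nhdsWithin_zero_atTop {r : ℝ} (hr : r < 0) :
    Tendsto (fun s : ℝ => s ^ r) (nhdsWithin 0 (Ioi 0)) atTop := by
  have h1 : Tendsto (fun s : ℝ => Real.exp (Real.log s * r)) (nhdsWithin 0 (Ioi 0)) atTop :=
    Real.tendsto_exp_atTop.comp
      (Real.tendsto_log_nhdsGT_zero.atBot_mul_const_of_neg hr)
  apply h1.congr'
  filter_upwards [self_mem_nhdsWithin] with s hs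
  rw [Real.rpow_def_of_pos hs]

end Aux

section Cases

open Filter

/-- Case `q ≠ 1`, `α ≠ 2 - q`. -/
lemma escort_caseI (q α : ℝ) (hq : q < 2) (hq1 : q ≠ 1) (hα : 0 < α) (hne : α ≠ 2 - q) :
    ∀ u, escortOf (qDen q) (qSupp q) α u = qDen (2 + (q - 2) / α) u := by
  have h2q : (0:ℝ) < 2 - q := by linarith
  have h1q : (1:ℝ) - q ≠ 0 := fun h => hq1 (by linarith)
  set c : ℝ := (1 - q) / (2 - q) with hc_def
  set r : ℝ := (2 - q - α) / (1 - q) with hr_def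
  have hc : c ≠ 0 := div_ne_zero h1q (ne_of_gt h2q)
  have hqα : 2 - q - α ≠ 0 := fun h => hne (by linarith)
  have hr : r ≠ 0 := div_ne_zero hqα h1q
  have hcr : c * r = (2 - q - α) / (2 - q) := by
    rw [hc_def, hr_def]; field_simp
  set q' : ℝ := 2 + (q - 2) / α with hq'_def
  have hq'1 : q' ≠ 1 := by
    rw [hq'_def]
    intro h
    have : (q - 2) / α = -1 := by linarith
    rw [div_eq_iff (ne_of_gt hα)] at this
    exact hne (by linarith)
  have h1q' : 1 - q' = (2 - q - α) / α := by
    rw [hq'_def]; field_simp; ring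
  have h2q' : 2 - q' = (2 - q) / α := by
    rw [hq'_def]; field_simp; ring
  set Y : ℝ → ℝ := fun s => (1 - (1 - c * s) ^ r) / (c * r) with hY_def
  set g : ℝ → ℝ := fun t => (1 - c * t) ^ (r - 1) with hg_def
  -- positivity of base on [0, x] for x in the support
  have hbase : ∀ x ∈ qSupp q, ∀ t ∈ Icc (0:ℝ) x, 0 < 1 - c * t := by
    intro x hx t ht
    rcases eq_or_lt_of_le ht.1 with h | h
    · simp [← h]
    · exact base_pos hq (Ioc_subset_qSupp hx ⟨h, ht.2⟩)
  have hY0 : Y 0 = 0 := by simp [hY_def]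
  -- value of yOf on the support
  have hY : ∀ x ∈ qSupp q, yOf (qDen q) α x = Y x := by
    intro x hx
    apply yOf_eq_of hx Y g
    · exact fun t ht => hasDerivAt_pow_aux hc hr (hbase x hx t ht)
    · intro t ht
      have hin : ContinuousAt (fun s : ℝ => 1 - c * s) t :=
        (continuous_const.sub (continuous_const.mul continuous_id)).continuousAt
      exact (hin.rpow_const (Or.inl (ne_of_gt (hbase x hx t ht)))).continuousWithinAt
    · intro t ht
      have htm := Ioc_subset_qSupp hx ht
      have hb := base_pos hq htm
      show qDen q t ^ (1 - α) = (1 - c * t) ^ (r - 1)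
      rw [qDen_eq hq hq1 htm, ← Real.rpow_mul hb.le, hc_def, hr_def]
      congr 1
      field_simp; ring
    · exact hY0
  -- the pointwise identity
  have hid : ∀ x ∈ qSupp q, qDen q x ^ α = qexp q' (-(Y x / (2 - q'))) := by
    intro x hx
    have hs : 0 < 1 - c * x := base_pos hq hx
    have hsr : 0 < (1 - c * x) ^ r := Real.rpow_pos_of_pos hs r
    have harg : 1 + (1 - q') * -(Y x / (2 - q')) = (1 - c * x) ^ r := by
      have hco : (1 - q') / (2 - q') = c * r := by
        rw [h1q', h2q', hcr]
        field_simp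
      have hcr0 : c * r ≠ 0 := mul_ne_zero hc hr
      have h2q'0 : (2:ℝ) - q' ≠ 0 := by
        rw [h2q']; exact div_ne_zero (ne_of_gt h2q) (ne_of_gt hα)
      have : (1 - q') * -(Y x / (2 - q')) = -((1 - q') / (2 - q') * Y x) := by
        field_simp
      rw [this, hco, hY_def]
      field_simp
      ring
    rw [qDen_eq hq hq1 hx, qexp, if_neg hq'1, harg,
      max_eq_left hsr.le, ← Real.rpow_mul hs.le, ← Real.rpow_mul hs.le]
    congr 1
    rw [hr_def, h1q']
    field_simp
  -- the image
  have hgpos : ∀ t : ℝ, 0 < 1 - c * t → 0 < g t := fun t ht => Real.rpow_pos_of_pos ht _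
  have hq'lt : α < 2 - q → q' < 1 := by
    intro h
    have : (q - 2) / α < -1 := (div_lt_iff₀ hα).mpr (by nlinarith)
    rw [hq'_def]; linarith
  have hq'ge : 2 - q < α → ¬ q' < 1 := by
    intro h
    have : (-1:ℝ) < (q - 2) / α := (lt_div_iff₀ hα).mpr (by nlinarith)
    rw [hq'_def]; push_neg; linarith
  have hLval : (1 - 0) / (c * r) = (2 - q') / (1 - q') := by
    rw [h1q', h2q', hcr]; field_simp; norm_num
  have himg : Y '' qSupp q = qSupp q' := by
    rcases hq1.lt_or_gt with hql | hqg
    · -- q < 1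
      have h1qpos : (0:ℝ) < 1 - q := by linarith
      have hcpos : 0 < c := by rw [hc_def]; exact div_pos h1qpos h2q
      have hb : (0:ℝ) < (2 - q) / (1 - q) := div_pos h2q h1qpos
      have hcb : 1 - c * ((2 - q) / (1 - q)) = 0 := by
        rw [hc_def]; field_simp; norm_num
      have hbpos : ∀ t ∈ Ico (0:ℝ) ((2 - q) / (1 - q)), 0 < 1 - c * t := by
        intro t ht
        have : c * t < c * ((2 - q) / (1 - q)) := mul_lt_mul_of_pos_left ht.2 hcpos
        nlinarith
      rw [qSupp_of_lt hql]
      rcases hne.lt_or_gt with hlt | hgt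
      · -- α < 2 - q : bounded case
        have hrpos : 0 < r := by rw [hr_def]; exact div_pos (by linarith) h1qpos
        have hcrpos : 0 < c * r := mul_pos hcpos hrpos
        have hcontY : Continuous Y := by
          apply Continuous.div_const
          apply Continuous.sub continuous_const
          exact (continuous_const.sub (continuous_const.mul continuous_id)).rpow_const
            (fun s => Or.inr hrpos.le)
        have hmono : StrictMonoOn Y (Icc 0 ((2 - q) / (1 - q))) := by
          apply strictMonoOn_of_deriv_pos (convex_Icc _ _) hcontY.continuousOn
          intro t ht
          rw [interior_Icc] at ht
          rw [(hasDerivAt_pow_aux hc hr (hbpos t ⟨ht.1.le, ht.2⟩)).deriv]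
          exact hgpos t (hbpos t ⟨ht.1.le, ht.2⟩)
        have hYb : Y ((2 - q) / (1 - q)) = (2 - q') / (1 - q') := by
          show (1 - (1 - c * ((2 - q) / (1 - q))) ^ r) / (c * r) = _
          rw [hcb, Real.zero_rpow hr, sub_zero, ← hLval]
          norm_num
        rw [image_Ioo_of_Icc hb hcontY.continuousOn hmono hY0 hYb, qSupp_of_lt (hq'lt hlt)]
      · -- α > 2 - q : unbounded
        have hrneg : r < 0 := by
          rw [hr_def]; exact div_neg_of_neg_of_pos (by linarith) h1qpos
        have hcrneg : c * r < 0 := mul_neg_of_pos_of_neg hcpos hrneg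
        have hder : ∀ t ∈ Ico (0:ℝ) ((2 - q) / (1 - q)), HasDerivAt Y (g t) t :=
          fun t ht => hasDerivAt_pow_aux hc hr (hbpos t ht)
        have hmono : StrictMonoOn Y (Ico 0 ((2 - q) / (1 - q))) := by
          apply strictMonoOn_of_hasDerivAt_pos (convex_Ico _ _) hder
          intro t ht
          rw [interior_Ico] at ht
          exact hgpos t (hbpos t ⟨ht.1.le, ht.2⟩)
        have hcont : ContinuousOn Y (Ico 0 ((2 - q) / (1 - q))) :=
          fun t ht => (hder t ht).continuousAt.continuousWithinAt
        have hsb : Filter.Tendsto (fun x : ℝ => 1 - c * x)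
            (nhdsWithin ((2 - q) / (1 - q)) (Iio ((2 - q) / (1 - q))))
            (nhdsWithin 0 (Ioi 0)) := by
          rw [tendsto_nhdsWithin_iff]
          constructor
          · have h0 : Filter.Tendsto (fun x : ℝ => 1 - c * x)
                (nhds ((2 - q) / (1 - q))) (nhds (1 - c * ((2 - q) / (1 - q)))) :=
              (continuous_const.sub (continuous_const.mul continuous_id)).tendsto _
            rw [hcb] at h0
            exact h0.mono_left nhdsWithin_le_nhds
          · filter_upwards [self_mem_nhdsWithin] with z hz
            have : c * z < c * ((2 - q) / (1 - q)) := mul_lt_mul_of_pos_left hz hcpos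
            exact mem_Ioi.mpr (by nlinarith)
        have hT : Filter.Tendsto (fun x : ℝ => (1 - c * x) ^ r)
            (nhdsWithin ((2 - q) / (1 - q)) (Iio ((2 - q) / (1 - q)))) Filter.atTop :=
          (tendsto_rpow_nhdsWithin_zero_atTop hrneg).comp hsb
        have htop : Filter.Tendsto Y
            (nhdsWithin ((2 - q) / (1 - q)) (Iio ((2 - q) / (1 - q)))) Filter.atTop := by
          have h1 := (Filter.tendsto_atTop_add_const_right _ (-1 : ℝ) hT).atTop_mul_const
            (inv_pos.mpr (neg_pos.mpr hcrneg))
          apply h1.congr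
          intro x
          show ((1 - c * x) ^ r + -1) * (-(c * r))⁻¹ = (1 - (1 - c * x) ^ r) / (c * r)
          have hcr0 : c * r ≠ 0 := ne_of_lt hcrneg
          field_simp
          ring
        rw [image_Ioi_of_atTop_within hb hcont hmono hY0 htop, qSupp_of_ge (hq'ge hgt)]
    · -- q > 1
      have hcneg : c < 0 := by rw [hc_def]; exact div_neg_of_neg_of_pos (by linarith) h2q
      have hbpos : ∀ t ∈ Ici (0:ℝ), 0 < 1 - c * t := by
        intro t ht
        have ht0 : (0:ℝ) ≤ t := ht
        nlinarith
      have hder : ∀ t ∈ Ici (0:ℝ), HasDerivAt Y (g t) t :=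
        fun t ht => hasDerivAt_pow_aux hc hr (hbpos t ht)
      have hmono : StrictMonoOn Y (Ici 0) := by
        apply strictMonoOn_of_hasDerivAt_pos (convex_Ici _) hder
        intro t ht
        rw [interior_Ici] at ht
        exact hgpos t (hbpos t (mem_Ici.mpr (le_of_lt ht)))
      have hcont : ContinuousOn Y (Ici 0) :=
        fun t ht => (hder t ht).continuousAt.continuousWithinAt
      have hsb : Filter.Tendsto (fun x : ℝ => 1 - c * x) Filter.atTop Filter.atTop := by
        have h1 : Filter.Tendsto (fun x : ℝ => -c * x) Filter.atTop Filter.atTop :=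
          Filter.Tendsto.const_mul_atTop (neg_pos.mpr hcneg) tendsto_id
        have h2 := Filter.tendsto_atTop_add_const_right Filter.atTop (1:ℝ) h1
        apply h2.congr; intro x; ring
      rw [qSupp_of_ge (by push_neg; linarith : ¬ q < 1)]
      rcases hne.lt_or_gt with hlt | hgt
      · -- α < 2 - q : bounded
        have hrneg : r < 0 := by
          rw [hr_def]; exact div_neg_of_pos_of_neg (by linarith) (by linarith)
        have hT : Filter.Tendsto (fun x : ℝ => (1 - c * x) ^ r) Filter.atTop (nhds 0) := by
          have h1 := tendsto_rpow_neg_atTop (neg_pos.mpr hrneg)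
          simp only [neg_neg] at h1
          exact h1.comp hsb
        have hYlim : Filter.Tendsto Y Filter.atTop (nhds ((2 - q') / (1 - q'))) := by
          have h1 := ((tendsto_const_nhds : Filter.Tendsto (fun _ : ℝ => (1:ℝ))
            Filter.atTop (nhds 1)).sub hT).div_const (c * r)
          rw [hLval] at h1
          exact h1
        rw [image_Ioi_of_tendsto hcont hmono hY0 hYlim, qSupp_of_lt (hq'lt hlt)]
      · -- α > 2 - q
        have hrpos : 0 < r := by
          rw [hr_def]; exact div_pos_iff.mpr (Or.inr ⟨by linarith, by linarith⟩)
        have hcrneg : c * r < 0 := by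
          rw [hcr]; exact div_neg_of_neg_of_pos (by linarith) h2q
        have hT : Filter.Tendsto (fun x : ℝ => (1 - c * x) ^ r) Filter.atTop Filter.atTop :=
          (tendsto_rpow_atTop hrpos).comp hsb
        have htop : Filter.Tendsto Y Filter.atTop Filter.atTop := by
          have h1 := (Filter.tendsto_atTop_add_const_right _ (-1 : ℝ) hT).atTop_mul_const
            (inv_pos.mpr (neg_pos.mpr hcrneg))
          apply h1.congr
          intro x
          show ((1 - c * x) ^ r + -1) * (-(c * r))⁻¹ = (1 - (1 - c * x) ^ r) / (c * r)
          have hcr0 : c * r ≠ 0 := ne_of_lt hcrneg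
          field_simp
          ring
        rw [image_Ioi_of_atTop hcont hmono hY0 htop, qSupp_of_ge (hq'ge hgt)]
  exact escort_eq_of Y hY himg hid

/-- Case `q ≠ 1`, `α = 2 - q` (the transform to the exponential density). -/
lemma escort_caseII (q : ℝ) (hq : q < 2) (hq1 : q ≠ 1) :
    ∀ u, escortOf (qDen q) (qSupp q) (2 - q) u = qDen 1 u := by
  have h2q : (0:ℝ) < 2 - q := by linarith
  have h1q : (1:ℝ) - q ≠ 0 := fun h => hq1 (by linarith)
  set c : ℝ := (1 - q) / (2 - q) with hc_def
  have hc : c ≠ 0 := div_ne_zero h1q (ne_of_gt h2q)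
  set Y : ℝ → ℝ := fun s => -Real.log (1 - c * s) / c with hY_def
  set g : ℝ → ℝ := fun t => (1 - c * t)⁻¹ with hg_def
  have hbase : ∀ x ∈ qSupp q, ∀ t ∈ Icc (0:ℝ) x, 0 < 1 - c * t := by
    intro x hx t ht
    rcases eq_or_lt_of_le ht.1 with h | h
    · simp [← h]
    · exact base_pos hq (Ioc_subset_qSupp hx ⟨h, ht.2⟩)
  have hY0 : Y 0 = 0 := by simp [hY_def]
  have hY : ∀ x ∈ qSupp q, yOf (qDen q) (2 - q) x = Y x := by
    intro x hx
    apply yOf_eq_of hx Y g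
    · exact fun t ht => hasDerivAt_log_aux hc (hbase x hx t ht)
    · intro t ht
      exact (((continuous_const.sub (continuous_const.mul continuous_id)).continuousAt).inv₀
        (ne_of_gt (hbase x hx t ht))).continuousWithinAt
    · intro t ht
      have htm := Ioc_subset_qSupp hx ht
      have hb := base_pos hq htm
      show qDen q t ^ (1 - (2 - q)) = (1 - c * t)⁻¹
      rw [qDen_eq hq hq1 htm, ← Real.rpow_mul hb.le, hc_def]
      have hexp : 1 / (1 - q) * (1 - (2 - q)) = -1 := by field_simp; ring
      rw [hexp, Real.rpow_neg_one]
    · exact hY0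
  have hid : ∀ x ∈ qSupp q, qDen q x ^ (2 - q) = qexp 1 (-(Y x / (2 - 1))) := by
    intro x hx
    have hs : 0 < 1 - (1 - q) / (2 - q) * x := base_pos hq hx
    rw [qDen_eq hq hq1 hx, ← Real.rpow_mul hs.le, qexp, if_pos rfl,
      Real.rpow_def_of_pos hs]
    congr 1
    show Real.log (1 - (1 - q) / (2 - q) * x) * (1 / (1 - q) * (2 - q))
        = -(-Real.log (1 - (1 - q) / (2 - q) * x) / ((1 - q) / (2 - q)) / (2 - 1))
    generalize Real.log (1 - (1 - q) / (2 - q) * x) = L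
    field_simp
    norm_num
  have hgpos : ∀ t : ℝ, 0 < 1 - c * t → 0 < g t := fun t ht => inv_pos.mpr ht
  have himg : Y '' qSupp q = qSupp 1 := by
    rw [qSupp_of_ge (lt_irrefl 1)]
    rcases hq1.lt_or_gt with hql | hqg
    · -- q < 1
      have h1qpos : (0:ℝ) < 1 - q := by linarith
      have hcpos : 0 < c := by rw [hc_def]; exact div_pos h1qpos h2q
      have hb : (0:ℝ) < (2 - q) / (1 - q) := div_pos h2q h1qpos
      have hcb : 1 - c * ((2 - q) / (1 - q)) = 0 := by
        rw [hc_def]; field_simp; norm_num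
      have hbpos : ∀ t ∈ Ico (0:ℝ) ((2 - q) / (1 - q)), 0 < 1 - c * t := by
        intro t ht
        have : c * t < c * ((2 - q) / (1 - q)) := mul_lt_mul_of_pos_left ht.2 hcpos
        nlinarith
      have hder : ∀ t ∈ Ico (0:ℝ) ((2 - q) / (1 - q)), HasDerivAt Y (g t) t :=
        fun t ht => hasDerivAt_log_aux hc (hbpos t ht)
      have hmono : StrictMonoOn Y (Ico 0 ((2 - q) / (1 - q))) := by
        apply strictMonoOn_of_hasDerivAt_pos (convex_Ico _ _) hder
        intro t ht
        rw [interior_Ico] at ht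
        exact hgpos t (hbpos t ⟨ht.1.le, ht.2⟩)
      have hcont : ContinuousOn Y (Ico 0 ((2 - q) / (1 - q))) :=
        fun t ht => (hder t ht).continuousAt.continuousWithinAt
      have hsb : Filter.Tendsto (fun x : ℝ => 1 - c * x)
          (nhdsWithin ((2 - q) / (1 - q)) (Iio ((2 - q) / (1 - q))))
          (nhdsWithin 0 (Ioi 0)) := by
        rw [tendsto_nhdsWithin_iff]
        constructor
        · have h0 : Filter.Tendsto (fun x : ℝ => 1 - c * x)
              (nhds ((2 - q) / (1 - q))) (nhds (1 - c * ((2 - q) / (1 - q)))) :=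
            (continuous_const.sub (continuous_const.mul continuous_id)).tendsto _
          rw [hcb] at h0
          exact h0.mono_left nhdsWithin_le_nhds
        · filter_upwards [self_mem_nhdsWithin] with z hz
          have : c * z < c * ((2 - q) / (1 - q)) := mul_lt_mul_of_pos_left hz hcpos
          exact mem_Ioi.mpr (by nlinarith)
      have hlog : Filter.Tendsto (fun x : ℝ => Real.log (1 - c * x))
          (nhdsWithin ((2 - q) / (1 - q)) (Iio ((2 - q) / (1 - q)))) Filter.atBot :=
        Real.tendsto_log_nhdsGT_zero.comp hsb
      have htop : Filter.Tendsto Y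
          (nhdsWithin ((2 - q) / (1 - q)) (Iio ((2 - q) / (1 - q)))) Filter.atTop := by
        have h1 := hlog.atBot_mul_const_of_neg
          (show -(c⁻¹) < 0 from neg_lt_zero.mpr (inv_pos.mpr hcpos))
        apply h1.congr
        intro x
        show Real.log (1 - c * x) * -c⁻¹ = -Real.log (1 - c * x) / c
        ring
      rw [qSupp_of_lt hql]
      exact image_Ioi_of_atTop_within hb hcont hmono hY0 htop
    · -- q > 1
      have hcneg : c < 0 := by rw [hc_def]; exact div_neg_of_neg_of_pos (by linarith) h2q
      have hbpos : ∀ t ∈ Ici (0:ℝ), 0 < 1 - c * t := by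
        intro t ht
        have ht0 : (0:ℝ) ≤ t := ht
        nlinarith
      have hder : ∀ t ∈ Ici (0:ℝ), HasDerivAt Y (g t) t :=
        fun t ht => hasDerivAt_log_aux hc (hbpos t ht)
      have hmono : StrictMonoOn Y (Ici 0) := by
        apply strictMonoOn_of_hasDerivAt_pos (convex_Ici _) hder
        intro t ht
        rw [interior_Ici] at ht
        exact hgpos t (hbpos t (mem_Ici.mpr (le_of_lt ht)))
      have hcont : ContinuousOn Y (Ici 0) :=
        fun t ht => (hder t ht).continuousAt.continuousWithinAt
      have hsb : Filter.Tendsto (fun x : ℝ => 1 - c * x) Filter.atTop Filter.atTop := by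
        have h1 : Filter.Tendsto (fun x : ℝ => -c * x) Filter.atTop Filter.atTop :=
          Filter.Tendsto.const_mul_atTop (neg_pos.mpr hcneg) tendsto_id
        have h2 := Filter.tendsto_atTop_add_const_right Filter.atTop (1:ℝ) h1
        apply h2.congr; intro x; ring
      have htop : Filter.Tendsto Y Filter.atTop Filter.atTop := by
        have h1 := (Real.tendsto_log_atTop.comp hsb).atTop_mul_const
          (show (0:ℝ) < -c⁻¹ from neg_pos.mpr (inv_neg''.mpr hcneg))
        apply h1.congr
        intro x
        show Real.log (1 - c * x) * -c⁻¹ = -Real.log (1 - c * x) / c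
        ring
      rw [qSupp_of_ge (by push_neg; linarith : ¬ q < 1)]
      exact image_Ioi_of_atTop hcont hmono hY0 htop
  exact escort_eq_of Y hY himg hid

/-- Case `q = 1`, `α ≠ 1`. -/
lemma escort_caseIII (α : ℝ) (hα : 0 < α) (hα1 : α ≠ 1) :
    ∀ u, escortOf (qDen 1) (qSupp 1) α u = qDen (2 + (1 - 2) / α) u := by
  have h1α : (1:ℝ) - α ≠ 0 := fun h => hα1 (by linarith)
  set q' : ℝ := 2 + (1 - 2) / α with hq'_def
  have h2q' : 2 - q' = 1 / α := by rw [hq'_def]; field_simp; norm_num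
  have h1q' : 1 - q' = (1 - α) / α := by rw [hq'_def]; field_simp; ring
  have hq'1 : q' ≠ 1 := by
    rw [hq'_def]
    intro h
    have h0 : (1 - 2) / α = -1 := by linarith
    rw [div_eq_iff (ne_of_gt hα)] at h0
    exact hα1 (by linarith)
  set Y : ℝ → ℝ := fun s => (1 - Real.exp (-(1 - α) * s)) / (1 - α) with hY_def
  set g : ℝ → ℝ := fun t => Real.exp (-(1 - α) * t) with hg_def
  have hder : ∀ t : ℝ, HasDerivAt Y (g t) t := fun t => hasDerivAt_exp_aux2 h1α t
  have hY0 : Y 0 = 0 := by simp [hY_def]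
  have hY : ∀ x ∈ qSupp 1, yOf (qDen 1) α x = Y x := by
    intro x hx
    apply yOf_eq_of hx Y g
    · exact fun t _ => hder t
    · exact (Real.continuous_exp.comp
        ((continuous_const.mul continuous_id))).continuousOn
    · intro t ht
      have htm := Ioc_subset_qSupp hx ht
      show qDen 1 t ^ (1 - α) = Real.exp (-(1 - α) * t)
      rw [qDen_one_eq htm, ← Real.exp_mul]
      congr 1; ring
    · exact hY0
  have hid : ∀ x ∈ qSupp 1, qDen 1 x ^ α = qexp q' (-(Y x / (2 - q'))) := by
    intro x hx
    have hE : (0:ℝ) < Real.exp (-(1 - α) * x) := Real.exp_pos _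
    have h2q'0 : (2:ℝ) - q' ≠ 0 := by rw [h2q']; exact one_div_ne_zero (ne_of_gt hα)
    have harg : 1 + (1 - q') * -(Y x / (2 - q')) = Real.exp (-(1 - α) * x) := by
      have hco : (1 - q') / (2 - q') = 1 - α := by rw [h1q', h2q']; field_simp
      have h0 : (1 - q') * -(Y x / (2 - q')) = -((1 - q') / (2 - q') * Y x) := by
        field_simp
      rw [h0, hco, hY_def]
      field_simp
      ring
    rw [qDen_one_eq hx, qexp, if_neg hq'1, harg, max_eq_left hE.le, ← Real.exp_mul,
      ← Real.exp_mul]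
    congr 1
    rw [h1q']
    field_simp
  have himg : Y '' qSupp 1 = qSupp q' := by
    rw [qSupp_of_ge (lt_irrefl 1)]
    have hmono : StrictMonoOn Y (Ici 0) :=
      strictMonoOn_of_hasDerivAt_pos (convex_Ici _) (fun t _ => hder t)
        (fun t _ => Real.exp_pos _)
    have hcont : ContinuousOn Y (Ici 0) :=
      fun t _ => (hder t).continuousAt.continuousWithinAt
    rcases hα1.lt_or_gt with hlt | hgt
    · -- α < 1 : bounded image
      have hq'lt : q' < 1 := by
        rw [hq'_def]
        have : (1 - 2) / α < -1 := by rw [div_lt_iff₀ hα]; linarith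
        linarith
      have hEtend : Filter.Tendsto (fun x : ℝ => Real.exp (-(1 - α) * x))
          Filter.atTop (nhds 0) := by
        apply Real.tendsto_exp_atBot.comp
        have h1 : Filter.Tendsto (fun x : ℝ => (1 - α) * x) Filter.atTop Filter.atTop :=
          Filter.Tendsto.const_mul_atTop (by linarith) tendsto_id
        have h2 := tendsto_neg_atTop_atBot.comp h1
        apply h2.congr; intro x; show -((1 - α) * x) = -(1 - α) * x; ring
      have hYlim : Filter.Tendsto Y Filter.atTop (nhds ((2 - q') / (1 - q'))) := by
        have h1 := ((tendsto_const_nhds : Filter.Tendsto (fun _ : ℝ => (1:ℝ))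
          Filter.atTop (nhds 1)).sub hEtend).div_const (1 - α)
        have h2 : (1 - 0) / (1 - α) = (2 - q') / (1 - q') := by
          rw [h1q', h2q']; field_simp; norm_num
        rw [h2] at h1; exact h1
      rw [image_Ioi_of_tendsto hcont hmono hY0 hYlim, qSupp_of_lt hq'lt]
    · -- α > 1
      have hq'ge : ¬ q' < 1 := by
        rw [hq'_def]; push_neg
        have : (-1:ℝ) ≤ (1 - 2) / α := by rw [le_div_iff₀ hα]; nlinarith
        linarith
      have hEtend : Filter.Tendsto (fun x : ℝ => Real.exp (-(1 - α) * x))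
          Filter.atTop Filter.atTop := by
        apply Real.tendsto_exp_atTop.comp
        have h1 : Filter.Tendsto (fun x : ℝ => (α - 1) * x) Filter.atTop Filter.atTop :=
          Filter.Tendsto.const_mul_atTop (by linarith) tendsto_id
        apply h1.congr; intro x; ring
      have htop : Filter.Tendsto Y Filter.atTop Filter.atTop := by
        have h1 := (Filter.tendsto_atTop_add_const_right _ (-1:ℝ) hEtend).atTop_mul_const
          (inv_pos.mpr (show (0:ℝ) < -(1 - α) by linarith))
        apply h1.congr
        intro x
        show (Real.exp (-(1 - α) * x) + -1) * (-(1 - α))⁻¹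
            = (1 - Real.exp (-(1 - α) * x)) / (1 - α)
        generalize Real.exp (-(1 - α) * x) = E
        field_simp [sub_ne_zero.mpr hα1]
        ring
      rw [image_Ioi_of_atTop hcont hmono hY0 htop, qSupp_of_ge hq'ge]
  exact escort_eq_of Y hY himg hid

/-- Case `q = 1`, `α = 1` (the identity transform). -/
lemma escort_caseIV :
    ∀ u, escortOf (qDen 1) (qSupp 1) 1 u = qDen 1 u := by
  apply escort_eq_of (fun s : ℝ => s)
  · intro x hx
    apply yOf_eq_of hx (fun s : ℝ => s) (fun _ => 1)
    · exact fun t _ => hasDerivAt_id t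
    · exact continuousOn_const
    · intro t ht; simp
    · rfl
  · exact image_id' _
  · intro x hx
    rw [Real.rpow_one, qDen_one_eq hx, qexp, if_pos rfl]
    norm_num

/-- Master lemma: the general closure identity. -/
lemma escort_master (q : ℝ) (hq : q < 2) (α : ℝ) (hα : 0 < α) :
    ∀ u, escortOf (qDen q) (qSupp q) α u = qDen (2 + (q - 2) / α) u := by
  rcases eq_or_ne q 1 with rfl | hq1
  · rcases eq_or_ne α 1 with rfl | hα1
    · have h1 : (2:ℝ) + (1 - 2) / 1 = 1 := by norm_num
      rw [h1]
      exact escort_caseIV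
    · exact escort_caseIII α hα hα1
  · rcases eq_or_ne α (2 - q) with rfl | hne
    · have h1 : 2 + (q - 2) / (2 - q) = 1 := by
        have h0 : (q - 2) / (2 - q) = -1 := by
          rw [div_eq_iff (show (2:ℝ) - q ≠ 0 by intro h; linarith)]; ring
        rw [h0]; norm_num
      rw [h1]
      exact escort_caseII q hq hq1
    · exact escort_caseI q α hq hq1 hα hne


end Cases

/-- **Closure of the q-exponential family under differential-escort transformations**:
for `q < 2` and `α > 0`, `𝔈_α[ℰ_q] = ℰ_{q̄}` with `q̄ = 2 + (q-2)/α`; in particular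
`𝔈_{2-q}[ℰ_q] = ℰ_1` is the exponential density, and for any `q, q̃ < 2` one has
`𝔈_{(2-q)/(2-q̃)}[ℰ_q] = ℰ_{q̃}`. -/
theorem escort_qexponential_closure (q : ℝ) (hq : q < 2) (α : ℝ) (hα : 0 < α) :
    (∀ u : ℝ, escortOf (qDen q) (qSupp q) α u = qDen (2 + (q - 2) / α) u)
    ∧ (∀ u : ℝ, escortOf (qDen q) (qSupp q) (2 - q) u = qDen 1 u)
    ∧ (∀ q' : ℝ, q' < 2 →
        ∀ u : ℝ, escortOf (qDen q) (qSupp q) ((2 - q) / (2 - q')) u = qDen q' u) := by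
  refine ⟨escort_master q hq α hα, ?_, ?_⟩
  · have h := escort_master q hq (2 - q) (by linarith)
    have h1 : 2 + (q - 2) / (2 - q) = 1 := by
      have h0 : (q - 2) / (2 - q) = -1 := by
        rw [div_eq_iff (show (2:ℝ) - q ≠ 0 by intro h'; linarith)]; ring
      rw [h0]; norm_num
    rwa [h1] at h
  · intro q' hq' u
    have h2q : (0:ℝ) < 2 - q := by linarith
    have h2q' : (0:ℝ) < 2 - q' := by linarith
    have h := escort_master q hq ((2 - q) / (2 - q')) (div_pos h2q h2q')
    have h1 : 2 + (q - 2) / ((2 - q) / (2 - q')) = q' := by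
      have h0 : (q - 2) / ((2 - q) / (2 - q')) = -(2 - q') := by
        rw [div_div_eq_mul_div, div_eq_iff (ne_of_gt h2q)]
        ring
      rw [h0]; ring
    rw [h1] at h
    exact h u
end

section
/- Critical exponential decay of the differential-escort transform of an exact power-law tail (Lemma 1, critical case): let ρ : [0,∞) → ℝ be a continuous, strictly positive probability density with ρ(x) = c·x^{−β} for all x ≥ a, where a > 0, c > 0, β > 1, and let α = (β−1)/β. Then for all x ≥ a the change of variable satisfies y_α(x) = y_α(a) + c^{1/β} log(x/a), the transformed support is all of [0,∞) (i.e. ∫₀^∞ ρ^{1−α} = ∞), and for u ≥ y_α(a) the differential-escort density is exactly exponential: ρ_α(u) = c^{(β−1)/β} a^{−(β−1)} exp(−(β−1)(u − y_α(a))/c^{1/β}). -/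
open MeasureTheory Set

/-- **Critical exponential decay of the differential-escort transform of an exact
power-law tail** (Lemma 1, critical case): let `ρ` be a continuous, strictly positive
probability density on `[0,∞)` with `ρ(x) = c·x^{-β}` for `x ≥ a` (`a, c > 0`, `β > 1`),
and let `α = (β-1)/β`.  Then `y_α(x) = y_α(a) + c^{1/β} log(x/a)` for `x ≥ a`, the
transformed support is all of `[0,∞)` (i.e. `∫₀^∞ ρ^{1-α} = ∞`), and for `u ≥ y_α(a)`
the differential-escort density is exactly exponential:
`ρ_α(u) = c^{(β-1)/β} a^{-(β-1)} exp(−(β-1)(u − y_α(a))/c^{1/β})`. -/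
theorem powerlaw_escort_critical (ρ : ℝ → ℝ)
    (hcont : ContinuousOn ρ (Set.Ici 0)) (hpos : ∀ x : ℝ, 0 ≤ x → 0 < ρ x)
    (htot : (∫ x in Set.Ioi (0:ℝ), ρ x) = 1)
    (a c β : ℝ) (ha : 0 < a) (hc : 0 < c) (hβ : 1 < β)
    (htail : ∀ x : ℝ, a ≤ x → ρ x = c * x ^ (-β))
    (α : ℝ) (hα : α = (β - 1) / β) :
    (∀ x : ℝ, a ≤ x → yOf ρ α x = yOf ρ α a + c ^ (1 / β) * Real.log (x / a))
    ∧ (∫⁻ x in Set.Ioi (0:ℝ), ENNReal.ofReal (ρ x ^ (1 - α))) = ⊤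
    ∧ (∀ u : ℝ, yOf ρ α a ≤ u →
        escortOf ρ (Set.Ioi 0) α u
          = c ^ ((β - 1) / β) * a ^ (-(β - 1))
              * Real.exp (-((β - 1) * (u - yOf ρ α a) / c ^ (1 / β)))) := by
  have hβ0 : (0:ℝ) < β := by linarith
  have h1α : 1 - α = 1 / β := by rw [hα]; field_simp; ring
  set f : ℝ → ℝ := fun t => ρ t ^ (1 - α) with hf
  have hk : (0:ℝ) < c ^ (1 / β) := Real.rpow_pos_of_pos hc _
  set k : ℝ := c ^ (1 / β) with hkdef
  -- f is continuous on Ici 0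
  have hfc : ContinuousOn f (Ici 0) :=
    hcont.rpow_const fun x hx => Or.inl (hpos x hx).ne'
  -- f equals k * t⁻¹ on [a, ∞)
  have hfeq : ∀ t : ℝ, a ≤ t → f t = k * t⁻¹ := by
    intro t ht
    have ht0 : (0:ℝ) < t := lt_of_lt_of_le ha ht
    have : f t = (c * t ^ (-β)) ^ (1 / β) := by rw [hf]; simp only [h1α, htail t ht]
    rw [this, Real.mul_rpow hc.le (Real.rpow_nonneg ht0.le _), ← Real.rpow_mul ht0.le]
    · have h2 : -β * (1 / β) = -1 := by field_simp
      rw [h2, Real.rpow_neg_one]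
  -- interval integrability
  have hint : ∀ p q : ℝ, 0 ≤ p → 0 ≤ q → IntervalIntegrable f volume p q := by
    intro p q hp hq
    apply ContinuousOn.intervalIntegrable
    apply hfc.mono
    intro t ht
    rcases le_total p q with h | h
    · rw [uIcc_of_le h] at ht; exact le_trans hp ht.1
    · rw [uIcc_of_ge h] at ht; exact le_trans hq ht.1
  -- Part 1
  have part1 : ∀ x : ℝ, a ≤ x → yOf ρ α x = yOf ρ α a + k * Real.log (x / a) := by
    intro x hx
    have hx0 : (0:ℝ) ≤ x := le_trans ha.le hx
    have hsplit : yOf ρ α a + ∫ t in a..x, f t = yOf ρ α x :=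
      intervalIntegral.integral_add_adjacent_intervals (hint 0 a le_rfl ha.le)
        (hint a x ha.le hx0)
    rw [← hsplit]
    congr 1
    have : ∫ t in a..x, f t = ∫ t in a..x, k * t⁻¹ := by
      apply intervalIntegral.integral_congr
      intro t ht
      rw [uIcc_of_le hx] at ht
      exact hfeq t ht.1
    rw [this, intervalIntegral.integral_const_mul, integral_inv ?_]
    rw [uIcc_of_le hx]
    intro h0
    exact absurd h0.1 (not_le.mpr ha)
  -- strict monotonicity of yOf on Ici 0
  have hmono : StrictMonoOn (yOf ρ α) (Ici 0) := by
    intro x hx y hy hxy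
    have hsplit : yOf ρ α x + ∫ t in x..y, f t = yOf ρ α y :=
      intervalIntegral.integral_add_adjacent_intervals (hint 0 x le_rfl hx)
        (hint x y hx hy)
    have hposint : 0 < ∫ t in x..y, f t := by
      apply intervalIntegral.intervalIntegral_pos_of_pos_on (hint x y hx hy)
      · intro t ht
        exact Real.rpow_pos_of_pos (hpos t (le_trans hx ht.1.le)) _
      · exact hxy
    linarith
  refine ⟨part1, ?_, ?_⟩
  · -- Part 2
    by_contra h
    have hfin : (∫⁻ x in Set.Ioi (0:ℝ), ENNReal.ofReal (ρ x ^ (1 - α))) < ⊤ :=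
      lt_top_iff_ne_top.mpr h
    have hsub : Ioi a ⊆ Ioi (0:ℝ) := Ioi_subset_Ioi ha.le
    have hsub' : Ioi a ⊆ Ici (0:ℝ) := fun t ht => le_of_lt (lt_of_le_of_lt ha.le ht)
    have hintOn : IntegrableOn f (Ioi a) := by
      constructor
      · exact (hfc.mono hsub').aestronglyMeasurable measurableSet_Ioi
      · rw [hasFiniteIntegral_iff_ofReal]
        · exact lt_of_le_of_lt (lintegral_mono_set hsub) hfin
        · filter_upwards [ae_restrict_mem measurableSet_Ioi] with t ht
          exact (Real.rpow_pos_of_pos (hpos t (hsub' ht)) _).le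
    have hintOn2 : IntegrableOn (fun t : ℝ => k * t⁻¹) (Ioi a) :=
      hintOn.congr_fun (fun t ht => hfeq t (le_of_lt ht)) measurableSet_Ioi
    have hintOn3 : IntegrableOn (fun t : ℝ => t ^ (-1 : ℝ)) (Ioi a) := by
      have heq : EqOn (fun t : ℝ => k⁻¹ * (k * t⁻¹)) (fun t : ℝ => t ^ (-1 : ℝ)) (Ioi a) := by
        intro t ht
        simp only [Real.rpow_neg_one]
        field_simp
      have h' : IntegrableOn (fun t : ℝ => k⁻¹ * (k * t⁻¹)) (Ioi a) :=
        hintOn2.const_mul k⁻¹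
      exact h'.congr_fun heq measurableSet_Ioi
    rw [integrableOn_Ioi_rpow_iff ha] at hintOn3
    linarith
  · -- Part 3
    intro u hu
    set ya := yOf ρ α a with hya
    set s := (u - ya) / k with hs
    have hs0 : 0 ≤ s := div_nonneg (by linarith) hk.le
    set x₀ : ℝ := a * Real.exp s with hx₀
    have hax₀ : a ≤ x₀ := by
      nlinarith [Real.one_le_exp hs0, ha]
    have hx₀pos : 0 < x₀ := lt_of_lt_of_le ha hax₀
    have hyx₀ : yOf ρ α x₀ = u := by
      rw [part1 x₀ hax₀, hx₀, mul_comm a, mul_div_assoc, div_self ha.ne', mul_one,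
        Real.log_exp, hs, mul_div_cancel₀ _ hk.ne']
      ring
    have hmem : u ∈ yOf ρ α '' Ioi 0 := ⟨x₀, hx₀pos, hyx₀⟩
    have hinj : InjOn (yOf ρ α) (Ioi 0) := (hmono.injOn).mono Ioi_subset_Ici_self
    have hinv : Function.invFunOn (yOf ρ α) (Ioi 0) u = x₀ := by
      have hex : ∃ z ∈ Ioi (0:ℝ), yOf ρ α z = u := ⟨x₀, hx₀pos, hyx₀⟩
      exact hinj (Function.invFunOn_mem hex) hx₀pos
        ((Function.invFunOn_eq hex).trans hyx₀.symm)
    rw [escortOf, indicator_of_mem hmem, hinv, htail x₀ hax₀]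
    have hβα : β * α = β - 1 := by rw [hα]; field_simp
    rw [Real.mul_rpow hc.le (Real.rpow_nonneg hx₀pos.le _), ← Real.rpow_mul hx₀pos.le]
    have hexp2 : -β * α = -(β - 1) := by linarith [hβα]
    have hexp : x₀ ^ (-(β - 1)) = a ^ (-(β - 1)) * Real.exp (-((β - 1) * (u - ya) / k)) := by
      rw [hx₀, Real.mul_rpow ha.le (Real.exp_pos s).le, ← Real.exp_mul]
      congr 1
      rw [hs]
      ring
    rw [hexp2, hexp, hα]
    ring
end

section
/- Power-law decay of the differential-escort transform of an exact power-law tail (Lemma 1, supercritical case): let ρ : [0,∞) → ℝ be a continuous, strictly positive probability density with ρ(x) = c·x^{−β} for all x ≥ a, where a > 0, c > 0, β > 1, and let α > (β−1)/β. Set γ = 1 − β(1−α) > 0. Then for all x ≥ a the change of variable satisfies y_α(x) = y_α(a) + c^{1−α}(x^γ − a^γ)/γ, the transformed support is [0,∞), and for u ≥ y_α(a) the differential-escort density is exactly ρ_α(u) = c^α · [ (γ/c^{1−α})(u − u₀) ]^{−βα/γ}, where u₀ = y_α(a) − c^{1−α} a^γ/γ; consequently u^{βα/γ} · ρ_α(u)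 → c^α (γ/c^{1−α})^{−βα/γ} as u → ∞, i.e. ρ_α(u) decays as O(u^{−βα/(1−β(1−α))}). -/
open MeasureTheory Set

/-- **Power-law decay of the differential-escort transform of an exact power-law tail**
(Lemma 1, supercritical case): let `ρ` be a continuous, strictly positive probability
density on `[0,∞)` with `ρ(x) = c·x^{-β}` for `x ≥ a` (`a, c > 0`, `β > 1`), let
`α > (β-1)/β` and `γ = 1 − β(1-α) > 0`.  Then `y_α(x) = y_α(a) + c^{1-α}(x^γ − a^γ)/γ`
for `x ≥ a`, the transformed support is all of `[0,∞)` (`∫₀^∞ ρ^{1-α} = ∞`), and for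
`u ≥ y_α(a)` one has `ρ_α(u) = c^α · ((γ/c^{1-α})(u − u₀))^{-βα/γ}` with
`u₀ = y_α(a) − c^{1-α} a^γ/γ`; consequently
`u^{βα/γ} ρ_α(u) → c^α (γ/c^{1-α})^{-βα/γ}` as `u → ∞`, i.e. `ρ_α` decays as
`O(u^{-βα/(1-β(1-α))})`. -/
theorem powerlaw_escort_supercritical (ρ : ℝ → ℝ)
    (hcont : ContinuousOn ρ (Set.Ici 0)) (hpos : ∀ x : ℝ, 0 ≤ x → 0 < ρ x)
    (htot : (∫ x in Set.Ioi (0:ℝ), ρ x) = 1)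
    (a c β : ℝ) (ha : 0 < a) (hc : 0 < c) (hβ : 1 < β)
    (htail : ∀ x : ℝ, a ≤ x → ρ x = c * x ^ (-β))
    (α : ℝ) (hα : (β - 1) / β < α) (γ : ℝ) (hγ : γ = 1 - β * (1 - α)) :
    0 < γ
    ∧ (∀ x : ℝ, a ≤ x →
        yOf ρ α x = yOf ρ α a + c ^ (1 - α) * (x ^ γ - a ^ γ) / γ)
    ∧ (∫⁻ x in Set.Ioi (0:ℝ), ENNReal.ofReal (ρ x ^ (1 - α))) = ⊤
    ∧ (∀ u : ℝ, yOf ρ α a ≤ u →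
        escortOf ρ (Set.Ioi 0) α u
          = c ^ α * ((γ / c ^ (1 - α))
              * (u - (yOf ρ α a - c ^ (1 - α) * a ^ γ / γ))) ^ (-(β * α / γ)))
    ∧ Filter.Tendsto (fun u : ℝ => u ^ (β * α / γ) * escortOf ρ (Set.Ioi 0) α u)
        Filter.atTop (nhds (c ^ α * (γ / c ^ (1 - α)) ^ (-(β * α / γ)))) := by
  have hβ0 : (0:ℝ) < β := by linarith
  have hαβ : β - 1 < α * β := by
    have := (div_lt_iff₀ hβ0).mp hα; linarith
  have hγpos : 0 < γ := by rw [hγ]; nlinarith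
  have hγne : γ ≠ 0 := hγpos.ne'
  have hα0 : 0 < α := by
    rcases le_or_gt α 0 with h | h
    · nlinarith
    · exact h
  have hc1 : (0:ℝ) < c ^ (1 - α) := Real.rpow_pos_of_pos hc _
  -- continuity / integrability of ρ^{1-α}
  have hcont' : ContinuousOn (fun t => ρ t ^ (1 - α)) (Ici 0) :=
    hcont.rpow_const fun x hx => Or.inl (hpos x hx).ne'
  have hInt : ∀ x1 x2 : ℝ, 0 ≤ x1 → 0 ≤ x2 →
      IntervalIntegrable (fun t => ρ t ^ (1 - α)) volume x1 x2 := by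
    intro x1 x2 h1 h2
    refine (hcont'.mono ?_).intervalIntegrable
    intro t ht
    exact le_trans (le_min h1 h2) ht.1
  have hadd : ∀ x1 x2 : ℝ, 0 ≤ x1 → 0 ≤ x2 →
      yOf ρ α x2 = yOf ρ α x1 + ∫ t in x1..x2, ρ t ^ (1 - α) := by
    intro x1 x2 h1 h2
    rw [yOf, yOf, intervalIntegral.integral_add_adjacent_intervals (hInt 0 x1 le_rfl h1)
      (hInt x1 x2 h1 h2)]
  have hmono : StrictMonoOn (yOf ρ α) (Ici 0) := by
    intro x1 hx1 x2 hx2 h12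
    have h := hadd x1 x2 hx1 hx2
    have hp : 0 < ∫ t in x1..x2, ρ t ^ (1 - α) := by
      refine intervalIntegral.intervalIntegral_pos_of_pos_on (hInt x1 x2 hx1 hx2) ?_ h12
      intro t ht
      exact Real.rpow_pos_of_pos (hpos t (le_trans hx1 ht.1.le)) _
    linarith
  -- Part 2: explicit formula
  have hform : ∀ x : ℝ, a ≤ x →
      yOf ρ α x = yOf ρ α a + c ^ (1 - α) * (x ^ γ - a ^ γ) / γ := by
    intro x hx
    have hx0 : (0:ℝ) ≤ x := le_trans ha.le hx
    rw [hadd a x ha.le hx0]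
    congr 1
    have h1 : ∀ t ∈ uIcc a x, ρ t ^ (1 - α) = c ^ (1 - α) * t ^ (γ - 1) := by
      intro t ht
      have hta : a ≤ t := by
        rw [uIcc_of_le hx] at ht; exact ht.1
      have ht0 : (0:ℝ) < t := lt_of_lt_of_le ha hta
      rw [htail t hta, Real.mul_rpow hc.le (Real.rpow_nonneg ht0.le _),
        ← Real.rpow_mul ht0.le]
      congr 1
      rw [hγ]; ring
    rw [intervalIntegral.integral_congr h1, intervalIntegral.integral_const_mul,
      integral_rpow (Or.inr ⟨fun h => hγne (by linarith), fun h => absurd ((uIcc_of_le hx ▸ h).1) (not_le.mpr ha)⟩)]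
    rw [sub_add_cancel, mul_div_assoc]
  -- y_α(a) > 0
  have hy0 : yOf ρ α 0 = 0 := by simp [yOf]
  have hya_pos : 0 < yOf ρ α a := by
    have := hmono (self_mem_Ici) (mem_Ici.mpr ha.le) ha
    rwa [hy0] at this
  -- Part 3 : divergence of the lintegral
  have hlint : (∫⁻ x in Set.Ioi (0:ℝ), ENNReal.ofReal (ρ x ^ (1 - α))) = ⊤ := by
    by_contra hI
    set I := ∫⁻ x in Set.Ioi (0:ℝ), ENNReal.ofReal (ρ x ^ (1 - α)) with hIdef
    have hkey : ∀ x : ℝ, 0 ≤ x → yOf ρ α x ≤ I.toReal := by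
      intro x hx0
      have hint : IntegrableOn (fun t => ρ t ^ (1 - α)) (Ioc 0 x) volume :=
        (intervalIntegrable_iff_integrableOn_Ioc_of_le hx0).mp (hInt 0 x le_rfl hx0)
      have h1 : ENNReal.ofReal (yOf ρ α x)
          = ∫⁻ t in Ioc 0 x, ENNReal.ofReal (ρ t ^ (1 - α)) := by
        rw [yOf, intervalIntegral.integral_of_le hx0]
        refine MeasureTheory.ofReal_integral_eq_lintegral_ofReal hint ?_
        exact (ae_restrict_iff' measurableSet_Ioc).mpr (Filter.Eventually.of_forall
          fun t ht => Real.rpow_nonneg (hpos t ht.1.le).le _)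
      have h2 : (∫⁻ t in Ioc 0 x, ENNReal.ofReal (ρ t ^ (1 - α))) ≤ I :=
        lintegral_mono' (Measure.restrict_mono Ioc_subset_Ioi_self le_rfl) le_rfl
      have h3 := ENNReal.toReal_mono hI (h1 ▸ h2)
      rwa [ENNReal.toReal_ofReal] at h3
      · rcases eq_or_lt_of_le hx0 with h | h
        · rw [← h, hy0]
        · exact le_of_lt (hy0 ▸ hmono self_mem_Ici (mem_Ici.mpr hx0) h)
    set M := I.toReal with hM
    set s : ℝ := max 1 (a ^ γ + γ * (M + 1 - yOf ρ α a) / c ^ (1 - α)) with hsdef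
    have hs0 : (0:ℝ) < s := lt_of_lt_of_le one_pos (le_max_left _ _)
    set b : ℝ := s ^ (1/γ) with hbdef
    have hb0 : 0 ≤ b := Real.rpow_nonneg hs0.le _
    have hbγ : b ^ γ = s := by
      rw [hbdef, ← Real.rpow_mul hs0.le, one_div, inv_mul_cancel₀ hγne, Real.rpow_one]
    have hax : a ≤ a + b := by linarith
    have hxγ : s ≤ (a + b) ^ γ := by
      rw [← hbγ]
      exact Real.rpow_le_rpow hb0 (by linarith) hγpos.le
    have hform' := hform (a + b) hax
    have hss : a ^ γ + γ * (M + 1 - yOf ρ α a) / c ^ (1 - α) ≤ s := le_max_right _ _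
    have hgrow : M + 1 ≤ yOf ρ α (a + b) := by
      rw [hform']
      have h4 : γ * (M + 1 - yOf ρ α a) / c ^ (1 - α) ≤ (a + b) ^ γ - a ^ γ := by
        linarith
      have h5 : M + 1 - yOf ρ α a
          = c ^ (1 - α) * (γ * (M + 1 - yOf ρ α a) / c ^ (1 - α)) / γ := by
        field_simp
      have h6 : c ^ (1 - α) * (γ * (M + 1 - yOf ρ α a) / c ^ (1 - α)) / γ
          ≤ c ^ (1 - α) * ((a + b) ^ γ - a ^ γ) / γ := by
        gcongr
      linarith
    have := hkey (a + b) (by linarith)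
    linarith
  -- Part 4 : explicit escort formula
  set L := γ / c ^ (1 - α) with hL
  have hLpos : 0 < L := div_pos hγpos hc1
  set u₀ := yOf ρ α a - c ^ (1 - α) * a ^ γ / γ with hu₀
  have haγ : (0:ℝ) < a ^ γ := Real.rpow_pos_of_pos ha _
  have hkey4 : ∀ u : ℝ, yOf ρ α a ≤ u →
      escortOf ρ (Set.Ioi 0) α u = c ^ α * (L * (u - u₀)) ^ (-(β * α / γ)) := by
    intro u hu
    have hid : L * (u - u₀) = L * (u - yOf ρ α a) + a ^ γ := by
      rw [hu₀, hL]; field_simp; ring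
    have hsa : a ^ γ ≤ L * (u - u₀) := by
      rw [hid]
      nlinarith [mul_nonneg hLpos.le (sub_nonneg.mpr hu)]
    set s := L * (u - u₀) with hs
    have hspos : 0 < s := lt_of_lt_of_le haγ hsa
    set x := s ^ (1/γ) with hxdef
    have hxγ : x ^ γ = s := by
      rw [hxdef, ← Real.rpow_mul hspos.le, one_div, inv_mul_cancel₀ hγne, Real.rpow_one]
    have hax : a ≤ x := by
      have h7 : a = (a ^ γ) ^ (1/γ) := by
        rw [← Real.rpow_mul ha.le, mul_one_div, div_self hγne, Real.rpow_one]
      rw [h7, hxdef]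
      exact Real.rpow_le_rpow haγ.le hsa (by positivity)
    have hx0 : (0:ℝ) < x := lt_of_lt_of_le ha hax
    have hyx : yOf ρ α x = u := by
      rw [hform x hax, hxγ, hid, hL]
      field_simp
      ring
    have hexists : ∃ b ∈ Ioi (0:ℝ), yOf ρ α b = u := ⟨x, lt_of_lt_of_le ha hax, hyx⟩
    have hmem : u ∈ yOf ρ α '' Ioi 0 := ⟨x, lt_of_lt_of_le ha hax, hyx⟩
    have hinj : InjOn (yOf ρ α) (Ioi 0) := hmono.injOn.mono Ioi_subset_Ici_self
    have hxinv : Function.invFunOn (yOf ρ α) (Ioi 0) u = x :=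
      hinj (Function.invFunOn_mem hexists) (lt_of_lt_of_le ha hax)
        (by rw [Function.invFunOn_eq hexists, hyx])
    rw [escortOf, indicator_of_mem hmem, hxinv, htail x hax,
      Real.mul_rpow hc.le (Real.rpow_nonneg hx0.le _)]
    congr 1
    rw [← Real.rpow_mul hx0.le, ← hxγ, ← Real.rpow_mul hx0.le]
    congr 1
    field_simp
  -- Part 5 : the limit
  have htend : Filter.Tendsto (fun u : ℝ => u ^ (β * α / γ) * escortOf ρ (Set.Ioi 0) α u)
      Filter.atTop (nhds (c ^ α * L ^ (-(β * α / γ)))) := by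
    have h1 : Filter.Tendsto (fun u : ℝ => L * (u - u₀) / u) Filter.atTop (nhds L) := by
      have h1a : Filter.Tendsto (fun u : ℝ => L * (1 - u₀ * u⁻¹)) Filter.atTop
          (nhds (L * (1 - u₀ * 0))) :=
        (((tendsto_inv_atTop_zero (𝕜 := ℝ)).const_mul u₀).const_sub 1).const_mul L
      rw [mul_zero, sub_zero, mul_one] at h1a
      refine h1a.congr' ?_
      filter_upwards [Filter.eventually_gt_atTop (0:ℝ)] with u hu
      field_simp
    have h2 : ContinuousAt (fun t : ℝ => t ^ (-(β * α / γ))) L :=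
      Real.continuousAt_rpow_const L _ (Or.inl hLpos.ne')
    have h3 : Filter.Tendsto (fun u : ℝ => c ^ α * (L * (u - u₀) / u) ^ (-(β * α / γ)))
        Filter.atTop (nhds (c ^ α * L ^ (-(β * α / γ)))) :=
      ((h2.tendsto.comp h1).const_mul _)
    refine h3.congr' ?_
    filter_upwards [Filter.eventually_ge_atTop (yOf ρ α a),
      Filter.eventually_gt_atTop (0:ℝ)] with u hu hu0
    have hid : L * (u - u₀) = L * (u - yOf ρ α a) + a ^ γ := by
      rw [hu₀, hL]; field_simp; ring
    have hspos : 0 < L * (u - u₀) := by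
      rw [hid]; nlinarith [mul_nonneg hLpos.le (sub_nonneg.mpr hu)]
    rw [hkey4 u hu, Real.div_rpow hspos.le hu0.le, Real.rpow_neg hu0.le]
    have hue : u ^ (β * α / γ) ≠ 0 := (Real.rpow_pos_of_pos hu0 _).ne'
    field_simp
  exact ⟨hγpos, hform, hlint, hkey4, htend⟩
end
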